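/- For all n ≥ 1 and k ≥ 0, the number of self-dual Fishburn matrices of reduced size n with first-row sum k and even dimension equals the number of row-Fishburn matrices of size n whose last column has sum k; that is, |EM(n,k)| = |RM(n,k)|. -/

import Mathlib

open Finset

/-- Square matrices of nonnegative integers of dimension `m` (0-based indexing). -/
abbrev Mat (m : ℕ) := Matrix (Fin m) (Fin m) ℕ

/-- Upper-triangular: all entries strictly below the main diagonal vanish. -/
def UT {m : ℕ} (M : Mat m) : Prop := ∀ i j : Fin m, (j : ℕ) < (i : ℕ) → M i j = 0

/-- The size of a matrix: the sum of all its entries. -/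
def msize {m : ℕ} (M : Mat m) : ℕ := ∑ i : Fin m, ∑ j : Fin m, M i j

/-- Row `i` contains a nonzero entry. -/
def rowNonzero {m : ℕ} (M : Mat m) (i : Fin m) : Prop := ∃ j, M i j ≠ 0

/-- Column `j` contains a nonzero entry. -/
def colNonzero {m : ℕ} (M : Mat m) (j : Fin m) : Prop := ∃ i, M i j ≠ 0

/-- The dual matrix: transpose along the antidiagonal, `M̄_{i,j} = M_{m+1-j,m+1-i}`. -/
def dual {m : ℕ} (M : Mat m) : Mat m := fun i j => M j.rev i.rev

/-- A matrix is self-dual if it equals its dual. -/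
def SelfDual {m : ℕ} (M : Mat m) : Prop := M = dual M

/-- A Fishburn matrix: upper-triangular, every row and every column contains a
nonzero entry. -/
def IsFishburn {m : ℕ} (M : Mat m) : Prop :=
  UT M ∧ (∀ i, rowNonzero M i) ∧ (∀ j, colNonzero M j)

/-- The reduced size: sum of the entries in NW-cells and diagonal cells
(in 1-based terms, cells `(i,j)` with `i + j ≤ m + 1`). -/
def reducedSize {m : ℕ} (M : Mat m) : ℕ :=
  ∑ i : Fin m, ∑ j : Fin m, if (i : ℕ) + (j : ℕ) + 1 ≤ m then M i j else 0

/-- The reduced matrix: all entries in SE-cells are replaced by zeros. -/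
def reduced {m : ℕ} (M : Mat m) : Mat m :=
  fun i j => if (i : ℕ) + (j : ℕ) + 1 ≤ m then M i j else 0

/-- A super triangular matrix: upper-triangular and all SE-cells are zero. -/
def SuperTri {m : ℕ} (M : Mat m) : Prop :=
  UT M ∧ ∀ i j : Fin m, m < (i : ℕ) + (j : ℕ) + 1 → M i j = 0

/-- The sum of the first row. -/
def firstRowSum {m : ℕ} (M : Mat m) : ℕ :=
  ∑ i : Fin m, ∑ j : Fin m, if (i : ℕ) = 0 then M i j else 0

/-- The sum of the last column. -/
def lastColSum {m : ℕ} (M : Mat m) : ℕ :=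
  ∑ i : Fin m, ∑ j : Fin m, if (j : ℕ) + 1 = m then M i j else 0

/-- The sum of the diagonal cells (cells `(i,j)` with `i + j = m + 1`, 1-based). -/
def diagSum {m : ℕ} (M : Mat m) : ℕ :=
  ∑ i : Fin m, ∑ j : Fin m, if (i : ℕ) + (j : ℕ) + 1 = m then M i j else 0

/-- The sum of the center column (column `k+1` of a matrix of dimension `2k+1`). -/
def centerColSum {m : ℕ} (M : Mat m) : ℕ :=
  ∑ i : Fin m, ∑ j : Fin m, if 2 * (j : ℕ) + 1 = m then M i j else 0

/-- Square matrices of arbitrary dimension. -/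
abbrev SMat := Σ m : ℕ, Mat m

/-- `M(n)`: self-dual Fishburn matrices of reduced size `n`. -/
def Mset (n : ℕ) : Set SMat :=
  {A | IsFishburn A.2 ∧ SelfDual A.2 ∧ reducedSize A.2 = n}

/-- `M(n,k)`: matrices of `M(n)` whose first row has sum `k`. -/
def Mset₂ (n k : ℕ) : Set SMat := {A ∈ Mset n | firstRowSum A.2 = k}

/-- `M(n,k,p)`: matrices of `M(n,k)` whose diagonal cells have sum `p`. -/
def Mset₃ (n k p : ℕ) : Set SMat := {A ∈ Mset₂ n k | diagSum A.2 = p}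

/-- `EM(n,k)`: matrices of `M(n,k)` of even dimension. -/
def EMset (n k : ℕ) : Set SMat := {A ∈ Mset₂ n k | Even A.1}

/-- `OM(n,k)`: matrices of `M(n,k)` of odd dimension. -/
def OMset (n k : ℕ) : Set SMat := {A ∈ Mset₂ n k | Odd A.1}

/-- `RM(n)`: row-Fishburn matrices of size `n`. -/
def RMset (n : ℕ) : Set SMat :=
  {A | UT A.2 ∧ (∀ i, rowNonzero A.2 i) ∧ msize A.2 = n}

/-- `RM(n,k)`: row-Fishburn matrices of size `n` whose last column has sum `k`. -/
def RMset₂ (n k : ℕ) : Set SMat := {A ∈ RMset n | lastColSum A.2 = k}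

/-- `RM(n,k,p)`: matrices of `RM(n,k)` whose first row has sum `p`. -/
def RMset₃ (n k p : ℕ) : Set SMat := {A ∈ RMset₂ n k | firstRowSum A.2 = p}

/-- `SM(n)`: super triangular matrices of size `n` and dimension `2k+1` such that
(a) each of the first `k` columns contains a nonzero entry, and
(b) for `1 ≤ i ≤ k`, row `k+1-i` or column `k+1+i` contains a nonzero entry
(0-based: for `a < k`, row `a` or column `b` with `a + b = 2k` is nonzero). -/
def SMset (n : ℕ) : Set SMat :=
  {A | SuperTri A.2 ∧ msize A.2 = n ∧
    ∃ k : ℕ, A.1 = 2 * k + 1 ∧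
      (∀ j : Fin A.1, (j : ℕ) < k → colNonzero A.2 j) ∧
      (∀ a b : Fin A.1, (a : ℕ) < k → (a : ℕ) + (b : ℕ) = 2 * k →
        rowNonzero A.2 a ∨ colNonzero A.2 b)}

/-- `SM(n,k,p)`: matrices of `SM(n)` whose first row has sum `k` and whose center
column has sum `p`. -/
def SMset₃ (n k p : ℕ) : Set SMat :=
  {A ∈ SMset n | firstRowSum A.2 = k ∧ centerColSum A.2 = p}

/-- `B(n)`: upper-triangular matrices of size `n` in which every row except
possibly the first contains a nonzero entry. -/
def Bset (n : ℕ) : Set SMat :=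
  {A | UT A.2 ∧ (∀ i : Fin A.1, (i : ℕ) ≠ 0 → rowNonzero A.2 i) ∧ msize A.2 = n}

/-- `B(n,k,p)`: matrices of `B(n)` whose first row has sum `p` and whose last
column has sum `k`. -/
def Bset₃ (n k p : ℕ) : Set SMat :=
  {A ∈ Bset n | firstRowSum A.2 = p ∧ lastColSum A.2 = k}


noncomputable section
namespace SD12
open scoped Classical

abbrev NM := ℕ → ℕ → ℕ

def Supp (d : ℕ) (M : NM) : Prop := ∀ p q, d ≤ p ∨ d ≤ q ∨ q < p → M p q = 0
def rsum (d : ℕ) (M : NM) (p : ℕ) : ℕ := ∑ q ∈ Finset.range d, M p q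
def tsize (d : ℕ) (M : NM) : ℕ := ∑ p ∈ Finset.range d, rsum d M p
def RowNZ (M : NM) (p : ℕ) : Prop := ∃ q, M p q ≠ 0
def ColNZ (M : NM) (q : ℕ) : Prop := ∃ p, M p q ≠ 0

def PairSet (n k : ℕ) : Set (ℕ × NM × NM) :=
  {P | Supp P.1 P.2.1 ∧ Supp P.1 P.2.2 ∧ (∀ j < P.1, ColNZ P.2.1 j) ∧
    (∀ i < P.1, RowNZ P.2.1 i ∨ RowNZ P.2.2 i ∨ ColNZ P.2.2 i) ∧
    tsize P.1 P.2.1 + tsize P.1 P.2.2 = n ∧ rsum P.1 P.2.1 0 + rsum P.1 P.2.2 0 = k}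

def CSet (n k : ℕ) : Set (ℕ × NM) :=
  {P | Supp P.1 P.2 ∧ (∀ q < P.1, ColNZ P.2 q) ∧ tsize P.1 P.2 = n ∧ rsum P.1 P.2 0 = k}

lemma smat_ext {X Y : SMat} (h1 : X.1 = Y.1)
    (h2 : ∀ (p q : ℕ) (hp : p < X.1) (hq : q < X.1) (hp' : p < Y.1) (hq' : q < Y.1),
      X.2 ⟨p, hp⟩ ⟨q, hq⟩ = Y.2 ⟨p, hp'⟩ ⟨q, hq'⟩) : X = Y := by
  obtain ⟨a, Mx⟩ := X
  obtain ⟨b, My⟩ := Y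
  dsimp only at h1 h2
  subst h1
  simp only [Sigma.mk.inj_iff, heq_eq_eq]
  refine ⟨trivial, ?_⟩
  funext i j
  obtain ⟨p, hp⟩ := i
  obtain ⟨q, hq⟩ := j
  exact h2 p q hp hq hp hq

lemma finsum_conv (d : ℕ) (F : Fin d → Fin d → ℕ) (G : ℕ → ℕ → ℕ)
    (h : ∀ (p q : ℕ) (hp : p < d) (hq : q < d), F ⟨p, hp⟩ ⟨q, hq⟩ = G p q) :
    (∑ i : Fin d, ∑ j : Fin d, F i j) = ∑ p ∈ Finset.range d, ∑ q ∈ Finset.range d, G p q := by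
  have h1 : ∀ i : Fin d, ∑ j : Fin d, F i j = ∑ q ∈ Finset.range d, G (i : ℕ) q := by
    intro i
    have hc : ∀ j : Fin d, F i j = G (i : ℕ) (j : ℕ) := by
      intro j
      have := h i j i.2 j.2
      simpa using this
    rw [Finset.sum_congr rfl fun j _ => hc j]
    exact Fin.sum_univ_eq_sum_range (fun q => G (i : ℕ) q) d
  rw [Finset.sum_congr rfl fun i _ => h1 i]
  exact Fin.sum_univ_eq_sum_range (fun p => ∑ q ∈ Finset.range d, G p q) d

/-- the natural extension of a square matrix to ℕ × ℕ -/
def na (A : SMat) : NM := fun p q => if h : p < A.1 ∧ q < A.1 then A.2 ⟨p, h.1⟩ ⟨q, h.2⟩ else 0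

lemma na_apply (A : SMat) (p q : ℕ) (hp : p < A.1) (hq : q < A.1) :
    na A p q = A.2 ⟨p, hp⟩ ⟨q, hq⟩ := dif_pos ⟨hp, hq⟩

lemma na_apply' (A : SMat) (i j : Fin A.1) : na A (i : ℕ) (j : ℕ) = A.2 i j := by
  rw [na_apply A _ _ i.2 j.2]

lemma na_zero (A : SMat) (p q : ℕ) (h : A.1 ≤ p ∨ A.1 ≤ q) : na A p q = 0 :=
  dif_neg (by omega)

lemma supp_na (A : SMat) (hut : UT A.2) : Supp A.1 (na A) := by
  intro p q h
  rcases h with h | h | h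
  · exact na_zero A p q (Or.inl h)
  · exact na_zero A p q (Or.inr h)
  · by_cases hp : p < A.1 ∧ q < A.1
    · rw [na_apply A p q hp.1 hp.2]
      exact hut _ _ h
    · exact dif_neg hp

lemma rowNZ_na (A : SMat) (i : Fin A.1) : rowNonzero A.2 i ↔ RowNZ (na A) (i : ℕ) := by
  constructor
  · rintro ⟨j, hj⟩
    exact ⟨(j : ℕ), by rw [na_apply' A i j]; exact hj⟩
  · rintro ⟨q, hq⟩
    have hq' : q < A.1 := by
      by_contra h
      exact hq (na_zero A _ _ (Or.inr (by omega)))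
    exact ⟨⟨q, hq'⟩, by rw [← na_apply A _ _ i.2 hq']; exact hq⟩

lemma colNZ_na (A : SMat) (j : Fin A.1) : colNonzero A.2 j ↔ ColNZ (na A) (j : ℕ) := by
  constructor
  · rintro ⟨i, hi⟩
    exact ⟨(i : ℕ), by rw [na_apply' A i j]; exact hi⟩
  · rintro ⟨p, hp⟩
    have hp' : p < A.1 := by
      by_contra h
      exact hp (na_zero A _ _ (Or.inl (by omega)))
    exact ⟨⟨p, hp'⟩, by rw [← na_apply A _ _ hp' j.2]; exact hp⟩

lemma msize_na (A : SMat) : msize A.2 = tsize A.1 (na A) := by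
  exact finsum_conv A.1 A.2 (na A) (fun p q hp hq => (na_apply A p q hp hq).symm)

def refl2 (r : ℕ) (C : NM) : Mat r := fun i j => C (r - 1 - (j : ℕ)) (r - 1 - (i : ℕ))

def unrefl (A : SMat) : ℕ × NM :=
  (A.1, fun p q => if p < A.1 ∧ q < A.1 then na A (A.1 - 1 - q) (A.1 - 1 - p) else 0)

lemma na_refl2 (r : ℕ) (C : NM) (p q : ℕ) (hp : p < r) (hq : q < r) :
    na ⟨r, refl2 r C⟩ p q = C (r - 1 - q) (r - 1 - p) := by
  rw [na_apply ⟨r, refl2 r C⟩ p q hp hq]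
  rfl

lemma mem_RM_of_CSet {n k : ℕ} (P : ℕ × NM) (hP : P ∈ CSet n k) :
    (⟨P.1, refl2 P.1 P.2⟩ : SMat) ∈ RMset₂ n k := by
  obtain ⟨r, C⟩ := P
  obtain ⟨hs, hc, ht, hr⟩ := hP
  dsimp only at hs hc ht hr ⊢
  have hsupp : ∀ p q, C p q ≠ 0 → p < r ∧ q < r ∧ p ≤ q := by
    intro p q hpq
    by_contra hcon
    exact hpq (hs p q (by omega))
  constructor
  · refine ⟨?_, ?_, ?_⟩
    · intro i j hji
      have hi : (i : ℕ) < r := i.2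
      have hj : (j : ℕ) < r := j.2
      show C (r - 1 - (j : ℕ)) (r - 1 - (i : ℕ)) = 0
      apply hs
      right; right
      omega
    · intro i
      have hi : (i : ℕ) < r := i.2
      obtain ⟨p, hp⟩ := hc (r - 1 - (i : ℕ)) (by omega)
      have hpr := hsupp p _ hp
      refine ⟨⟨r - 1 - p, show r - 1 - p < r by omega⟩, ?_⟩
      show C (r - 1 - (r - 1 - p)) (r - 1 - (i : ℕ)) ≠ 0
      have he : r - 1 - (r - 1 - p) = p := by omega
      rw [he]
      exact hp
    · show msize (refl2 r C) = n
      unfold msize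
      rw [finsum_conv r (refl2 r C) (fun p q => C (r - 1 - q) (r - 1 - p)) (fun p q hp hq => rfl)]
      have h1 : ∀ p, (∑ q ∈ Finset.range r, C (r - 1 - q) (r - 1 - p))
          = ∑ q ∈ Finset.range r, C q (r - 1 - p) :=
        fun p => Finset.sum_range_reflect (fun q => C q (r - 1 - p)) r
      rw [Finset.sum_congr rfl fun p _ => h1 p]
      rw [Finset.sum_range_reflect (fun p => ∑ q ∈ Finset.range r, C q p) r]
      rw [Finset.sum_comm]
      exact ht
  · show lastColSum (refl2 r C) = k
    unfold lastColSum
    rw [finsum_conv r _ (fun p q => if q + 1 = r then C (r - 1 - q) (r - 1 - p) else 0)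
      (fun p q hp hq => rfl)]
    have h1 : ∀ p ∈ Finset.range r,
        (∑ q ∈ Finset.range r, if q + 1 = r then C (r - 1 - q) (r - 1 - p) else 0)
        = C 0 (r - 1 - p) := by
      intro p hp
      simp only [Finset.mem_range] at hp
      rw [Finset.sum_eq_single_of_mem (r - 1) (Finset.mem_range.2 (by omega))
        (fun q hq hne => if_neg (by simp only [Finset.mem_range] at hq; omega))]
      rw [if_pos (by omega)]
      congr 1
      omega
    rw [Finset.sum_congr rfl h1]
    rw [Finset.sum_range_reflect (fun p => C 0 p) r]
    exact hr

lemma mem_CSet_of_RM {n k : ℕ} (hn : 1 ≤ n) (A : SMat) (hA : A ∈ RMset₂ n k) :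
    unrefl A ∈ CSet n k := by
  obtain ⟨⟨hut, hrow, hsz⟩, hlc⟩ := hA
  have hna := supp_na A hut
  have hd0 : 0 < A.1 := by
    by_contra h
    have hz : msize A.2 = 0 := by
      unfold msize
      exact Finset.sum_eq_zero (fun i _ => absurd i.2 (by omega))
    omega
  unfold unrefl CSet
  simp only [Set.mem_setOf_eq]
  refine ⟨?_, ?_, ?_, ?_⟩
  · intro p q h
    show (if p < A.1 ∧ q < A.1 then na A (A.1 - 1 - q) (A.1 - 1 - p) else 0) = 0
    by_cases hpq : p < A.1 ∧ q < A.1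
    · rw [if_pos hpq]
      apply hna
      right; right; omega
    · exact if_neg hpq
  · intro q hq
    obtain ⟨j, hj⟩ := (rowNZ_na A ⟨A.1 - 1 - q, by omega⟩).mp (hrow _)
    have hj' : na A (A.1 - 1 - q) j ≠ 0 := hj
    have hjd : j < A.1 := by
      by_contra h
      exact hj' (na_zero A _ _ (Or.inr (by omega)))
    refine ⟨A.1 - 1 - j, ?_⟩
    dsimp only
    rw [if_pos ⟨by omega, hq⟩]
    have he : A.1 - 1 - (A.1 - 1 - j) = j := by omega
    rw [he]
    exact hj'
  · have hms : (∑ p ∈ Finset.range A.1, ∑ q ∈ Finset.range A.1, na A p q) = n := by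
      have h := msize_na A
      unfold tsize rsum at h
      omega
    unfold tsize rsum
    have h0 : ∀ p ∈ Finset.range A.1,
        (∑ q ∈ Finset.range A.1,
          if p < A.1 ∧ q < A.1 then na A (A.1 - 1 - q) (A.1 - 1 - p) else 0)
        = ∑ q ∈ Finset.range A.1, na A (A.1 - 1 - q) (A.1 - 1 - p) := by
      intro p hp
      simp only [Finset.mem_range] at hp
      apply Finset.sum_congr rfl
      intro q hq
      simp only [Finset.mem_range] at hq
      rw [if_pos ⟨hp, hq⟩]
    rw [Finset.sum_congr rfl h0]
    have h1 : ∀ p, (∑ q ∈ Finset.range A.1, na A (A.1 - 1 - q) (A.1 - 1 - p))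
        = ∑ q ∈ Finset.range A.1, na A q (A.1 - 1 - p) :=
      fun p => Finset.sum_range_reflect (fun q => na A q (A.1 - 1 - p)) A.1
    rw [Finset.sum_congr rfl fun p _ => h1 p]
    rw [Finset.sum_range_reflect (fun p => ∑ q ∈ Finset.range A.1, na A q p) A.1]
    rw [Finset.sum_comm]
    exact hms
  · unfold rsum
    have h0 : ∀ q ∈ Finset.range A.1,
        (if 0 < A.1 ∧ q < A.1 then na A (A.1 - 1 - q) (A.1 - 1 - 0) else 0)
        = na A (A.1 - 1 - q) (A.1 - 1) := by
      intro q hq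
      simp only [Finset.mem_range] at hq
      rw [if_pos ⟨hd0, hq⟩]
      norm_num
    rw [Finset.sum_congr rfl h0]
    rw [Finset.sum_range_reflect (fun q => na A q (A.1 - 1)) A.1]
    have hR : (∑ p ∈ Finset.range A.1, ∑ q ∈ Finset.range A.1,
        if q + 1 = A.1 then na A p q else 0) = ∑ p ∈ Finset.range A.1, na A p (A.1 - 1) := by
      apply Finset.sum_congr rfl
      intro p hp
      rw [Finset.sum_eq_single_of_mem (A.1 - 1) (Finset.mem_range.2 (by omega))
        (fun q hq hne => if_neg (by simp only [Finset.mem_range] at hq; omega))]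
      rw [if_pos (by omega)]
    rw [← hR, ← finsum_conv A.1 (fun i j => if (j : ℕ) + 1 = A.1 then A.2 i j else 0)
      (fun p q => if q + 1 = A.1 then na A p q else 0)
      (fun p q hp hq => by
        show (if q + 1 = A.1 then A.2 ⟨p, hp⟩ ⟨q, hq⟩ else 0)
          = (if q + 1 = A.1 then na A p q else 0)
        by_cases h : q + 1 = A.1
        · rw [if_pos h, if_pos h, na_apply A p q hp hq]
        · rw [if_neg h, if_neg h])]
    exact hlc

def e3 (n k : ℕ) (hn : 1 ≤ n) : ↥(CSet n k) ≃ ↥(RMset₂ n k) where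
  toFun := fun ⟨P, hP⟩ => ⟨⟨P.1, refl2 P.1 P.2⟩, mem_RM_of_CSet P hP⟩
  invFun := fun ⟨A, hA⟩ => ⟨unrefl A, mem_CSet_of_RM hn A hA⟩
  left_inv := by
    rintro ⟨⟨r, C⟩, hP⟩
    obtain ⟨hs, hc, ht, hr⟩ := hP
    apply Subtype.ext
    dsimp only [unrefl]
    refine Prod.ext rfl ?_
    funext p q
    dsimp only
    by_cases hpq : p < r ∧ q < r
    · rw [if_pos hpq, na_refl2 r C _ _ (by omega) (by omega)]
      have e1 : r - 1 - (r - 1 - p) = p := by omega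
      have e2 : r - 1 - (r - 1 - q) = q := by omega
      rw [e1, e2]
    · rw [if_neg hpq]
      exact (hs p q (by omega)).symm
  right_inv := by
    rintro ⟨A, hA⟩
    apply Subtype.ext
    refine smat_ext rfl ?_
    intro p q hp hq hp' hq'
    have hpA : p < A.1 := hp'
    have hqA : q < A.1 := hq'
    show (unrefl A).2 (A.1 - 1 - q) (A.1 - 1 - p) = A.2 ⟨p, hp'⟩ ⟨q, hq'⟩
    show (if A.1 - 1 - q < A.1 ∧ A.1 - 1 - p < A.1 then
      na A (A.1 - 1 - (A.1 - 1 - p)) (A.1 - 1 - (A.1 - 1 - q)) else 0) = A.2 ⟨p, hp'⟩ ⟨q, hq'⟩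
    rw [if_pos ⟨by omega, by omega⟩]
    have e1 : A.1 - 1 - (A.1 - 1 - p) = p := by omega
    have e2 : A.1 - 1 - (A.1 - 1 - q) = q := by omega
    rw [e1, e2, na_apply A p q hp' hq']

/-! ### Step A: fold a self-dual even Fishburn matrix into a pair -/

def foldL (A : SMat) : NM := fun p q => if p < A.1 / 2 ∧ q < A.1 / 2 then na A p q else 0
def foldV (A : SMat) : NM := fun p c => if p ≤ c ∧ c < A.1 / 2 then na A p (A.1 - 1 - c) else 0
def fold (A : SMat) : ℕ × NM × NM := (A.1 / 2, foldL A, foldV A)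

def nbase (m : ℕ) (L V : NM) : NM := fun p q => if q < m then L p q else V p (2 * m - 1 - q)
def nb (m : ℕ) (L V : NM) : NM := fun p q =>
  if p + q + 1 ≤ 2 * m then nbase m L V p q else nbase m L V (2 * m - 1 - q) (2 * m - 1 - p)
def unfoldP (P : ℕ × NM × NM) : SMat :=
  ⟨2 * P.1, fun i j => nb P.1 P.2.1 P.2.2 (i : ℕ) (j : ℕ)⟩

lemma nb_refl (m : ℕ) (L V : NM) (p q : ℕ) (hp : p < 2 * m) (hq : q < 2 * m) :
    nb m L V p q = nb m L V (2 * m - 1 - q) (2 * m - 1 - p) := by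
  unfold nb
  by_cases h : p + q + 1 ≤ 2 * m
  · rw [if_pos h]
    by_cases h2 : (2 * m - 1 - q) + (2 * m - 1 - p) + 1 ≤ 2 * m
    · rw [if_pos h2]
      have e1 : 2 * m - 1 - q = p := by omega
      have e2 : 2 * m - 1 - p = q := by omega
      rw [e1, e2]
    · rw [if_neg h2]
      have e1 : 2 * m - 1 - (2 * m - 1 - p) = p := by omega
      have e2 : 2 * m - 1 - (2 * m - 1 - q) = q := by omega
      rw [e1, e2]
  · rw [if_neg h, if_pos (by omega)]

lemma na_selfdual (A : SMat) (hsd : SelfDual A.2) (p q : ℕ) (hp : p < A.1) (hq : q < A.1) :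
    na A p q = na A (A.1 - 1 - q) (A.1 - 1 - p) := by
  rw [na_apply A p q hp hq]
  have h1 : A.2 ⟨p, hp⟩ ⟨q, hq⟩ = dual A.2 ⟨p, hp⟩ ⟨q, hq⟩ := by rw [← hsd]
  have h2 : dual A.2 ⟨p, hp⟩ ⟨q, hq⟩ = A.2 (Fin.rev ⟨q, hq⟩) (Fin.rev ⟨p, hp⟩) := rfl
  rw [h1, h2, ← na_apply' A (Fin.rev ⟨q, hq⟩) (Fin.rev ⟨p, hp⟩)]
  congr 1
  · rw [Fin.val_rev]
    show A.1 - (q + 1) = A.1 - 1 - q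
    omega
  · rw [Fin.val_rev]
    show A.1 - (p + 1) = A.1 - 1 - p
    omega

lemma sum_split (d m : ℕ) (hm : m ≤ d) (f : ℕ → ℕ) :
    ∑ q ∈ Finset.range d, f q
      = (∑ q ∈ Finset.range m, f q) + ∑ q ∈ Finset.range (d - m), f (m + q) := by
  conv_lhs => rw [Finset.range_eq_Ico]
  rw [← Finset.sum_Ico_consecutive f (Nat.zero_le m) hm, Finset.sum_Ico_eq_sum_range,
    Finset.sum_Ico_eq_sum_range]
  simp

lemma sum_fold (m : ℕ) (f : ℕ → ℕ) :
    ∑ q ∈ Finset.range (2 * m), f q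
      = (∑ q ∈ Finset.range m, f q) + ∑ c ∈ Finset.range m, f (2 * m - 1 - c) := by
  have h : 2 * m - m = m := by omega
  rw [sum_split (2 * m) m (by omega) f, h]
  congr 1
  rw [← Finset.sum_range_reflect (fun q => f (m + q)) m]
  apply Finset.sum_congr rfl
  intro c hc
  simp only [Finset.mem_range] at hc
  congr 1
  omega

lemma reducedSize_fold (A : SMat) (hut : UT A.2) (hd : A.1 = 2 * (A.1 / 2)) :
    reducedSize A.2 = tsize (A.1 / 2) (foldL A) + tsize (A.1 / 2) (foldV A) := by
  set m := A.1 / 2 with hm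
  have hna := supp_na A hut
  unfold reducedSize
  rw [finsum_conv A.1 _ (fun p q => if p + q + 1 ≤ A.1 then na A p q else 0)
    (fun p q hp hq => by
      show (if p + q + 1 ≤ A.1 then A.2 ⟨p, hp⟩ ⟨q, hq⟩ else 0)
        = (if p + q + 1 ≤ A.1 then na A p q else 0)
      by_cases h : p + q + 1 ≤ A.1
      · rw [if_pos h, if_pos h, na_apply A p q hp hq]
      · rw [if_neg h, if_neg h])]
  simp only [hd]
  rw [← Finset.sum_subset (Finset.range_subset_range.2 (show m ≤ 2 * m by omega))
    (fun p hp hpn => by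
      simp only [Finset.mem_range] at hp hpn
      apply Finset.sum_eq_zero
      intro q hq
      by_cases h : p + q + 1 ≤ 2 * m
      · rw [if_pos h]
        exact hna p q (by omega)
      · exact if_neg h)]
  have hstep : ∀ p ∈ Finset.range m,
      (∑ q ∈ Finset.range (2 * m), if p + q + 1 ≤ 2 * m then na A p q else 0)
        = rsum m (foldL A) p + rsum m (foldV A) p := by
    intro p hp
    simp only [Finset.mem_range] at hp
    rw [sum_fold m (fun q => if p + q + 1 ≤ 2 * m then na A p q else 0)]
    congr 1
    · apply Finset.sum_congr rfl
      intro q hq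
      simp only [Finset.mem_range] at hq
      rw [if_pos (by omega)]
      show na A p q = foldL A p q
      unfold foldL
      rw [← hm, if_pos ⟨hp, hq⟩]
    · apply Finset.sum_congr rfl
      intro c hc
      simp only [Finset.mem_range] at hc
      show (if p + (2 * m - 1 - c) + 1 ≤ 2 * m then na A p (2 * m - 1 - c) else 0) = foldV A p c
      unfold foldV
      rw [← hm]
      by_cases h : p ≤ c
      · rw [if_pos (by omega), if_pos ⟨h, hc⟩]
        congr 1
        omega
      · rw [if_neg (by omega), if_neg (by omega)]
  rw [Finset.sum_congr rfl hstep, Finset.sum_add_distrib]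
  rfl

lemma firstRowSum_fold (A : SMat) (hd : A.1 = 2 * (A.1 / 2)) (hm : 0 < A.1 / 2) :
    firstRowSum A.2 = rsum (A.1 / 2) (foldL A) 0 + rsum (A.1 / 2) (foldV A) 0 := by
  set m := A.1 / 2 with hmm
  unfold firstRowSum
  rw [finsum_conv A.1 _ (fun p q => if p = 0 then na A p q else 0)
    (fun p q hp hq => by
      show (if p = 0 then A.2 ⟨p, hp⟩ ⟨q, hq⟩ else 0) = (if p = 0 then na A p q else 0)
      by_cases h : p = 0
      · rw [if_pos h, if_pos h, na_apply A p q hp hq]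
      · rw [if_neg h, if_neg h])]
  simp only [hd]
  rw [Finset.sum_eq_single_of_mem 0 (Finset.mem_range.2 (by omega))
    (fun p _ hne => Finset.sum_eq_zero fun q _ => if_neg hne)]
  have hid : ∀ q ∈ Finset.range (2 * m), (if (0 : ℕ) = 0 then na A 0 q else 0) = na A 0 q :=
    fun q _ => if_pos rfl
  rw [Finset.sum_congr rfl hid, sum_fold m (fun q => na A 0 q)]
  congr 1
  · apply Finset.sum_congr rfl
    intro q hq
    simp only [Finset.mem_range] at hq
    show na A 0 q = foldL A 0 q
    unfold foldL
    rw [← hmm, if_pos ⟨hm, hq⟩]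
  · apply Finset.sum_congr rfl
    intro c hc
    simp only [Finset.mem_range] at hc
    show na A 0 (2 * m - 1 - c) = foldV A 0 c
    unfold foldV
    rw [← hmm, if_pos ⟨Nat.zero_le c, hc⟩]
    congr 1
    omega

lemma fold_mem {n k : ℕ} (hn : 1 ≤ n) (A : SMat) (hA : A ∈ EMset n k) :
    fold A ∈ PairSet n k := by
  obtain ⟨⟨⟨⟨hut, hrows, hcols⟩, hsd, hred⟩, hfrs⟩, heven⟩ := hA
  have hd : A.1 = 2 * (A.1 / 2) := by
    obtain ⟨r, hr⟩ := heven
    omega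
  set m := A.1 / 2 with hm
  have hna := supp_na A hut
  have hd1 : 0 < A.1 := by
    by_contra h
    have hz : reducedSize A.2 = 0 := by
      unfold reducedSize
      exact Finset.sum_eq_zero (fun i _ => absurd i.2 (by omega))
    omega
  have hm1 : 0 < m := by omega
  show fold A ∈ PairSet n k
  unfold PairSet fold
  simp only [Set.mem_setOf_eq, ← hm]
  refine ⟨?_, ?_, ?_, ?_, ?_, ?_⟩
  · intro p q h
    show (if p < m ∧ q < m then na A p q else 0) = 0
    rcases h with h | h | h
    · exact if_neg (by omega)
    · exact if_neg (by omega)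
    · by_cases hpq : p < m ∧ q < m
      · rw [if_pos hpq]; exact hna p q (by omega)
      · exact if_neg hpq
  · intro p c h
    show (if p ≤ c ∧ c < m then na A p (A.1 - 1 - c) else 0) = 0
    exact if_neg (by omega)
  · intro j hj
    obtain ⟨p, hp⟩ := (colNZ_na A ⟨j, by omega⟩).mp (hcols ⟨j, by omega⟩)
    have hp' : na A p j ≠ 0 := hp
    have hpj : p ≤ j := by
      by_contra h
      exact hp' (hna p j (by omega))
    refine ⟨p, ?_⟩
    show (if p < m ∧ j < m then na A p j else 0) ≠ 0
    rw [if_pos ⟨by omega, hj⟩]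
    exact hp'
  · intro i hi
    obtain ⟨q, hq⟩ := (rowNZ_na A ⟨i, by omega⟩).mp (hrows ⟨i, by omega⟩)
    have hq' : na A i q ≠ 0 := hq
    have hiq : i ≤ q ∧ q < A.1 := by
      constructor
      · by_contra h
        exact hq' (hna i q (by omega))
      · by_contra h
        exact hq' (hna i q (by omega))
    by_cases h1 : q < m
    · left
      refine ⟨q, ?_⟩
      show (if i < m ∧ q < m then na A i q else 0) ≠ 0
      rw [if_pos ⟨hi, h1⟩]
      exact hq'
    · set c := A.1 - 1 - q with hc
      have hcm : c < m := by omega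
      by_cases h2 : i ≤ c
      · right; left
        refine ⟨c, ?_⟩
        show (if i ≤ c ∧ c < m then na A i (A.1 - 1 - c) else 0) ≠ 0
        rw [if_pos ⟨h2, hcm⟩]
        have he : A.1 - 1 - c = q := by omega
        rw [he]
        exact hq'
      · right; right
        refine ⟨c, ?_⟩
        show (if c ≤ i ∧ i < m then na A c (A.1 - 1 - i) else 0) ≠ 0
        rw [if_pos ⟨by omega, hi⟩]
        have he : na A i q = na A (A.1 - 1 - q) (A.1 - 1 - i) :=
          na_selfdual A hsd i q (by omega) (by omega)
        rw [← hc] at he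
        rw [← he]
        exact hq'
  · rw [← reducedSize_fold A hut hd]
    exact hred
  · rw [← firstRowSum_fold A hd hm1]
    exact hfrs

lemma unfold_fold (A : SMat) (hut : UT A.2) (hsd : SelfDual A.2) (hd : A.1 = 2 * (A.1 / 2)) :
    unfoldP (fold A) = A := by
  set m := A.1 / 2 with hm
  have hna := supp_na A hut
  refine smat_ext (by show 2 * m = A.1; omega) ?_
  intro p q hp hq hp' hq'
  have hp2 : p < 2 * m := hp
  have hq2 : q < 2 * m := hq
  show nb m (foldL A) (foldV A) p q = A.2 ⟨p, hp'⟩ ⟨q, hq'⟩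
  rw [← na_apply A p q hp' hq']
  unfold nb nbase
  by_cases h : p + q + 1 ≤ 2 * m
  · rw [if_pos h]
    by_cases h1 : q < m
    · rw [if_pos h1]
      show foldL A p q = na A p q
      unfold foldL
      rw [← hm]
      by_cases h2 : p < m
      · rw [if_pos ⟨h2, h1⟩]
      · rw [if_neg (by omega)]
        exact (hna p q (by omega)).symm
    · rw [if_neg h1]
      show foldV A p (2 * m - 1 - q) = na A p q
      unfold foldV
      rw [← hm, if_pos ⟨by omega, by omega⟩]
      congr 1
      omega
  · rw [if_neg h]
    have hrefl : na A p q = na A (A.1 - 1 - q) (A.1 - 1 - p) :=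
      na_selfdual A hsd p q (by omega) (by omega)
    have e1 : A.1 - 1 - q = 2 * m - 1 - q := by omega
    have e2 : A.1 - 1 - p = 2 * m - 1 - p := by omega
    rw [hrefl, e1, e2]
    by_cases h1 : 2 * m - 1 - p < m
    · rw [if_pos h1]
      show foldL A (2 * m - 1 - q) (2 * m - 1 - p) = na A (2 * m - 1 - q) (2 * m - 1 - p)
      unfold foldL
      rw [← hm]
      by_cases h2 : 2 * m - 1 - q < m
      · rw [if_pos ⟨h2, h1⟩]
      · rw [if_neg (by omega)]
        exact (hna _ _ (by omega)).symm
    · rw [if_neg h1]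
      show foldV A (2 * m - 1 - q) (2 * m - 1 - (2 * m - 1 - p)) = na A (2 * m - 1 - q) (2 * m - 1 - p)
      unfold foldV
      rw [← hm, if_pos ⟨by omega, by omega⟩]
      congr 1
      omega

lemma fold_unfold (P : ℕ × NM × NM) (hsL : Supp P.1 P.2.1) (hsV : Supp P.1 P.2.2) :
    fold (unfoldP P) = P := by
  obtain ⟨m, L, V⟩ := P
  dsimp only at hsL hsV
  have hm2 : (2 * m) / 2 = m := by omega
  unfold fold unfoldP
  dsimp only
  refine Prod.ext hm2 (Prod.ext ?_ ?_)
  · funext p q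
    show (if p < 2 * m / 2 ∧ q < 2 * m / 2 then na ⟨2 * m, _⟩ p q else 0) = L p q
    by_cases h : p < m ∧ q < m
    · rw [if_pos (by omega : p < 2 * m / 2 ∧ q < 2 * m / 2)]
      rw [na_apply _ p q (by omega : p < 2 * m) (by omega : q < 2 * m)]
      show nb m L V p q = L p q
      unfold nb nbase
      rw [if_pos (by omega), if_pos (by omega)]
    · rw [if_neg (by omega)]
      exact (hsL p q (by omega)).symm
  · funext p c
    show (if p ≤ c ∧ c < 2 * m / 2 then na ⟨2 * m, _⟩ p (2 * m - 1 - c) else 0) = V p c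
    by_cases h : p ≤ c ∧ c < m
    · rw [if_pos (by omega : p ≤ c ∧ c < 2 * m / 2)]
      rw [na_apply _ p (2 * m - 1 - c) (by omega : p < 2 * m) (by omega : 2 * m - 1 - c < 2 * m)]
      show nb m L V p (2 * m - 1 - c) = V p c
      unfold nb nbase
      rw [if_pos (by omega), if_neg (by omega)]
      congr 1
      omega
    · rw [if_neg (by omega)]
      symm
      apply hsV
      omega

lemma unfold_mem {n k : ℕ} (hn : 1 ≤ n) (P : ℕ × NM × NM) (hP : P ∈ PairSet n k) :
    unfoldP P ∈ EMset n k := by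
  obtain ⟨hsL, hsV, hcL, hrow, hsize, hfst⟩ := hP
  obtain ⟨m, L, V⟩ := P
  dsimp only at hsL hsV hcL hrow hsize hfst
  have hm1 : 0 < m := by
    by_contra h
    have h0 : m = 0 := by omega
    subst h0
    unfold tsize at hsize
    simp at hsize
    omega
  have hutB : UT (unfoldP (m, L, V)).2 := by
    intro i j hji
    have hi : (i : ℕ) < 2 * m := i.2
    have hj : (j : ℕ) < 2 * m := j.2
    show nb m L V (i : ℕ) (j : ℕ) = 0
    unfold nb nbase
    by_cases h : (i : ℕ) + (j : ℕ) + 1 ≤ 2 * m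
    · rw [if_pos h, if_pos (by omega)]
      exact hsL _ _ (by omega)
    · rw [if_neg h]
      by_cases h2 : 2 * m - 1 - (i : ℕ) < m
      · rw [if_pos h2]
        exact hsL _ _ (by omega)
      · rw [if_neg h2]
        exact hsV _ _ (by omega)
  have hsdB : SelfDual (unfoldP (m, L, V)).2 := by
    funext i j
    have hi : (i : ℕ) < 2 * m := i.2
    have hj : (j : ℕ) < 2 * m := j.2
    have e1 : ((Fin.rev j) : ℕ) = 2 * m - 1 - (j : ℕ) := by
      rw [Fin.val_rev]
      show 2 * m - ((j : ℕ) + 1) = 2 * m - 1 - (j : ℕ)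
      omega
    have e2 : ((Fin.rev i) : ℕ) = 2 * m - 1 - (i : ℕ) := by
      rw [Fin.val_rev]
      show 2 * m - ((i : ℕ) + 1) = 2 * m - 1 - (i : ℕ)
      omega
    show nb m L V (i : ℕ) (j : ℕ) = nb m L V ((Fin.rev j) : ℕ) ((Fin.rev i) : ℕ)
    rw [e1, e2]
    exact nb_refl m L V _ _ hi hj
  have hrowB : ∀ i : Fin (unfoldP (m, L, V)).1, rowNonzero (unfoldP (m, L, V)).2 i := by
    intro i
    have hi : (i : ℕ) < 2 * m := i.2
    by_cases h1 : (i : ℕ) < m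
    · rcases hrow (i : ℕ) h1 with ⟨q, hq⟩ | ⟨c, hc⟩ | ⟨r, hr⟩
      · have hqm : q < m := by
          by_contra h
          exact hq (hsL _ _ (by omega))
        have hiq : (i : ℕ) ≤ q := by
          by_contra h
          exact hq (hsL _ _ (by omega))
        refine ⟨⟨q, show q < 2 * m by omega⟩, ?_⟩
        show nb m L V (i : ℕ) q ≠ 0
        unfold nb nbase
        rw [if_pos (by omega), if_pos (by omega)]
        exact hq
      · have hcm : c < m := by
          by_contra h
          exact hc (hsV _ _ (by omega))
        have hic : (i : ℕ) ≤ c := by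
          by_contra h
          exact hc (hsV _ _ (by omega))
        refine ⟨⟨2 * m - 1 - c, show 2 * m - 1 - c < 2 * m by omega⟩, ?_⟩
        show nb m L V (i : ℕ) (2 * m - 1 - c) ≠ 0
        unfold nb nbase
        rw [if_pos (by omega), if_neg (by omega)]
        have he : 2 * m - 1 - (2 * m - 1 - c) = c := by omega
        rw [he]
        exact hc
      · have hrm : r < m := by
          by_contra h
          exact hr (hsV _ _ (by omega))
        have hri : r ≤ (i : ℕ) := by
          by_contra h
          exact hr (hsV _ _ (by omega))
        refine ⟨⟨2 * m - 1 - r, show 2 * m - 1 - r < 2 * m by omega⟩, ?_⟩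
        show nb m L V (i : ℕ) (2 * m - 1 - r) ≠ 0
        unfold nb nbase
        by_cases h2 : r = (i : ℕ)
        · rw [if_pos (by omega), if_neg (by omega)]
          have he : 2 * m - 1 - (2 * m - 1 - r) = r := by omega
          rw [he, h2]
          rw [h2] at hr
          exact hr
        · rw [if_neg (by omega)]
          have e1 : 2 * m - 1 - (2 * m - 1 - r) = r := by omega
          rw [e1, if_neg (by omega)]
          have e2 : 2 * m - 1 - (2 * m - 1 - (i : ℕ)) = (i : ℕ) := by omega
          rw [e2]
          exact hr
    · set c := 2 * m - 1 - (i : ℕ) with hc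
      have hcm : c < m := by omega
      obtain ⟨r, hr⟩ := hcL c hcm
      have hrm : r ≤ c := by
        by_contra h
        exact hr (hsL _ _ (by omega))
      refine ⟨⟨2 * m - 1 - r, show 2 * m - 1 - r < 2 * m by omega⟩, ?_⟩
      show nb m L V (i : ℕ) (2 * m - 1 - r) ≠ 0
      unfold nb nbase
      rw [if_neg (by omega)]
      have e1 : 2 * m - 1 - (2 * m - 1 - r) = r := by omega
      rw [e1, if_pos (by omega)]
      have e2 : 2 * m - 1 - (i : ℕ) = c := by omega
      rw [e2]
      exact hr
  have hcolB : ∀ j : Fin (unfoldP (m, L, V)).1, colNonzero (unfoldP (m, L, V)).2 j := by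
    intro j
    have hj : (j : ℕ) < 2 * m := j.2
    obtain ⟨q, hq⟩ := hrowB ⟨2 * m - 1 - (j : ℕ), show 2 * m - 1 - (j : ℕ) < 2 * m by omega⟩
    have hq' : nb m L V (2 * m - 1 - (j : ℕ)) (q : ℕ) ≠ 0 := hq
    refine ⟨⟨2 * m - 1 - (q : ℕ), show 2 * m - 1 - (q : ℕ) < 2 * m by omega⟩, ?_⟩
    show nb m L V (2 * m - 1 - (q : ℕ)) (j : ℕ) ≠ 0
    rw [nb_refl m L V _ _ (by omega) (by omega)]
    have hq2 : (q : ℕ) < 2 * m := q.2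
    have e1 : 2 * m - 1 - (j : ℕ) = 2 * m - 1 - (j : ℕ) := rfl
    have e2 : 2 * m - 1 - (2 * m - 1 - (q : ℕ)) = (q : ℕ) := by omega
    rw [e2]
    exact hq'
  have hdB : (unfoldP (m, L, V)).1 = 2 * ((unfoldP (m, L, V)).1 / 2) := by
    show 2 * m = 2 * (2 * m / 2)
    omega
  have hFU := fold_unfold (m, L, V) hsL hsV
  refine ⟨⟨⟨⟨hutB, hrowB, hcolB⟩, hsdB, ?_⟩, ?_⟩, ?_⟩
  · rw [reducedSize_fold (unfoldP (m, L, V)) hutB hdB]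
    have h1 : (unfoldP (m, L, V)).1 / 2 = m := by
      show 2 * m / 2 = m
      omega
    rw [show (foldL (unfoldP (m, L, V))) = (fold (unfoldP (m, L, V))).2.1 from rfl]
    rw [show (foldV (unfoldP (m, L, V))) = (fold (unfoldP (m, L, V))).2.2 from rfl]
    rw [h1, hFU]
    exact hsize
  · rw [firstRowSum_fold (unfoldP (m, L, V)) hdB (by show 0 < 2 * m / 2; omega)]
    have h1 : (unfoldP (m, L, V)).1 / 2 = m := by
      show 2 * m / 2 = m
      omega
    rw [show (foldL (unfoldP (m, L, V))) = (fold (unfoldP (m, L, V))).2.1 from rfl]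
    rw [show (foldV (unfoldP (m, L, V))) = (fold (unfoldP (m, L, V))).2.2 from rfl]
    rw [h1, hFU]
    exact hfst
  · exact ⟨m, by show 2 * m = m + m; omega⟩

def e1 (n k : ℕ) (hn : 1 ≤ n) : ↥(EMset n k) ≃ ↥(PairSet n k) where
  toFun := fun ⟨A, hA⟩ => ⟨fold A, fold_mem hn A hA⟩
  invFun := fun ⟨P, hP⟩ => ⟨unfoldP P, unfold_mem hn P hP⟩
  left_inv := by
    rintro ⟨A, hA⟩
    apply Subtype.ext
    obtain ⟨⟨⟨⟨hut, hrows, hcols⟩, hsd, hred⟩, hfrs⟩, heven⟩ := hA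
    have hd : A.1 = 2 * (A.1 / 2) := by
      obtain ⟨r, hr⟩ := heven
      omega
    exact unfold_fold A hut hsd hd
  right_inv := by
    rintro ⟨P, hP⟩
    apply Subtype.ext
    exact fold_unfold P hP.1 hP.2.1

/-! ### Step B: machinery -/

def Tcol (V : NM) (c : ℕ) : Prop := ∃ r, V r c ≠ 0
def tb (V : NM) (j : ℕ) : ℕ := (Finset.filter (fun c => Tcol V c) (Finset.range j)).card
def fpos (V : NM) (i : ℕ) : ℕ := i + tb V i

lemma tb_mono (V : NM) {i j : ℕ} (h : i ≤ j) : tb V i ≤ tb V j :=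
  Finset.card_le_card (Finset.filter_subset_filter _ (Finset.range_subset_range.2 h))

lemma tb_succ (V : NM) (i : ℕ) : tb V (i + 1) = tb V i + (if Tcol V i then 1 else 0) := by
  unfold tb
  rw [Finset.range_add_one, Finset.filter_insert]
  by_cases h : Tcol V i
  · rw [if_pos h, if_pos h, Finset.card_insert_of_notMem (by simp)]
  · rw [if_neg h, if_neg h]
    omega

lemma tb_le (V : NM) (i : ℕ) : tb V i ≤ i := by
  calc tb V i ≤ (Finset.range i).card := Finset.card_filter_le _ _
  _ = i := Finset.card_range i

lemma fpos_lt_fpos (V : NM) {i j : ℕ} (h : i < j) : fpos V i < fpos V j := by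
  have h1 : tb V i ≤ tb V (i + 1) := tb_mono V (by omega)
  have h2 : tb V (i + 1) ≤ tb V j := tb_mono V (by omega)
  have h3 : fpos V i < fpos V (i + 1) := by
    unfold fpos
    omega
  have h4 : fpos V (i + 1) ≤ fpos V j := by
    unfold fpos
    omega
  omega

lemma fpos_lt_iff (V : NM) {i j : ℕ} : fpos V i < fpos V j ↔ i < j := by
  constructor
  · intro h
    by_contra hc
    rcases Nat.lt_or_ge j i with h2 | h2
    · exact absurd (fpos_lt_fpos V h2) (by omega)
    · have : j = i := by omega
      subst this
      omega
  · exact fpos_lt_fpos V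

lemma fpos_zero (V : NM) : fpos V 0 = 0 := by
  unfold fpos tb
  simp

def gpos (V : NM) (p : ℕ) : ℕ :=
  (Finset.filter (fun i => fpos V i < p) (Finset.range p)).card

lemma gpos_fpos (V : NM) (i : ℕ) : gpos V (fpos V i) = i := by
  unfold gpos
  have hset : Finset.filter (fun i' => fpos V i' < fpos V i) (Finset.range (fpos V i))
      = Finset.range i := by
    apply Finset.ext
    intro x
    simp only [Finset.mem_filter, Finset.mem_range]
    constructor
    · rintro ⟨_, h2⟩
      exact (fpos_lt_iff V).mp h2
    · intro h
      refine ⟨?_, fpos_lt_fpos V h⟩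
      have := tb_le V x
      have := fpos_lt_fpos V h
      unfold fpos at *
      omega
  rw [hset, Finset.card_range]

/-- cover: every position below `fpos V m` is old or new -/
lemma fpos_cover (V : NM) (m : ℕ) :
    ∀ q < fpos V m, (∃ i < m, fpos V i = q) ∨ (∃ c < m, Tcol V c ∧ q = fpos V c + 1) := by
  induction m with
  | zero => intro q hq; rw [fpos_zero] at hq; omega
  | succ m ih =>
    intro q hq
    have hstep : fpos V (m + 1) = fpos V m + 1 + (if Tcol V m then 1 else 0) := by
      unfold fpos
      rw [tb_succ]
      omega
    rcases Nat.lt_or_ge q (fpos V m) with h | h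
    · rcases ih q h with ⟨i, hi, he⟩ | ⟨c, hc, ht, he⟩
      · exact Or.inl ⟨i, by omega, he⟩
      · exact Or.inr ⟨c, by omega, ht, he⟩
    · rcases Nat.eq_or_lt_of_le h with h2 | h2
      · exact Or.inl ⟨m, by omega, h2⟩
      · right
        refine ⟨m, by omega, ?_, ?_⟩
        · by_contra hT
          rw [if_neg hT] at hstep
          omega
        · by_cases hT : Tcol V m
          · rw [if_pos hT] at hstep
            omega
          · rw [if_neg hT] at hstep
            omega

/-! zero-row runs -/

def ZR (C : NM) (p : ℕ) : Prop := ∀ q, C p q = 0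
def zc (d : ℕ) (C : NM) (p : ℕ) : ℕ :=
  (Finset.filter (fun q => ∀ s, p ≤ s → s ≤ q → ZR C s) (Finset.Ico p d)).card
def np (d : ℕ) (C : NM) (p : ℕ) : Prop := Odd (zc d C p)

lemma zc_rec (d : ℕ) (C : NM) (p : ℕ) :
    zc d C p = if ZR C p ∧ p < d then zc d C (p + 1) + 1 else 0 := by
  by_cases h : ZR C p ∧ p < d
  · rw [if_pos h]
    unfold zc
    have hset : Finset.filter (fun q => ∀ s, p ≤ s → s ≤ q → ZR C s) (Finset.Ico p d)
        = insert p (Finset.filter (fun q => ∀ s, p + 1 ≤ s → s ≤ q → ZR C s)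
            (Finset.Ico (p + 1) d)) := by
      apply Finset.ext
      intro x
      simp only [Finset.mem_filter, Finset.mem_Ico, Finset.mem_insert]
      constructor
      · rintro ⟨⟨hx1, hx2⟩, hx3⟩
        rcases Nat.eq_or_lt_of_le hx1 with h1 | h1
        · exact Or.inl h1.symm
        · exact Or.inr ⟨⟨by omega, hx2⟩, fun s hs1 hs2 => hx3 s (by omega) hs2⟩
      · rintro (heq | ⟨⟨hx1, hx2⟩, hx3⟩)
        · subst heq
          exact ⟨⟨le_refl _, h.2⟩, fun s hs1 hs2 => by
            have hsx : s = x := by omega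
            subst hsx
            exact h.1⟩
        · refine ⟨⟨by omega, hx2⟩, fun s hs1 hs2 => ?_⟩
          rcases Nat.eq_or_lt_of_le hs1 with h1 | h1
          · subst h1
            exact h.1
          · exact hx3 s (by omega) hs2
    rw [hset, Finset.card_insert_of_notMem (by simp)]
  · rw [if_neg h]
    unfold zc
    rw [Finset.card_eq_zero, Finset.eq_empty_iff_forall_notMem]
    intro x hx
    simp only [Finset.mem_filter, Finset.mem_Ico] at hx
    obtain ⟨⟨hx1, hx2⟩, hx3⟩ := hx
    exact h ⟨hx3 p (le_refl _) hx1, by omega⟩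

lemma np_iff (d : ℕ) (C : NM) (p : ℕ) :
    np d C p ↔ ZR C p ∧ p < d ∧ ¬ np d C (p + 1) := by
  unfold np
  by_cases h : ZR C p ∧ p < d
  · rw [zc_rec, if_pos h, Nat.odd_add_one]
    tauto
  · rw [zc_rec, if_neg h]
    simp only [Nat.odd_iff]
    tauto

lemma np_zr {d : ℕ} {C : NM} {p : ℕ} (h : np d C p) : ZR C p := ((np_iff d C p).mp h).1
lemma np_lt {d : ℕ} {C : NM} {p : ℕ} (h : np d C p) : p < d := ((np_iff d C p).mp h).2.1
lemma np_succ {d : ℕ} {C : NM} {p : ℕ} (h : np d C p) : ¬ np d C (p + 1) :=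
  ((np_iff d C p).mp h).2.2

lemma np_pred {d : ℕ} {C : NM} {p : ℕ} (h : np d C p) (h1 : 1 ≤ p) : ¬ np d C (p - 1) := by
  intro h2
  have := np_succ h2
  have he : p - 1 + 1 = p := by omega
  rw [he] at this
  exact this h

/-! forward map -/

def OldP (m : ℕ) (V : NM) (p : ℕ) : Prop := ∃ i < m, fpos V i = p
def NewP (m : ℕ) (V : NM) (q : ℕ) : Prop := ∃ c < m, Tcol V c ∧ q = fpos V c + 1

def fwdM (m : ℕ) (L V : NM) : NM := fun p q =>
  if OldP m V p then
    (if OldP m V q then L (gpos V p) (gpos V q)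
     else if NewP m V q then V (gpos V p) (gpos V (q - 1)) else 0)
  else 0

def fwd (P : ℕ × NM × NM) : ℕ × NM := (fpos P.2.2 P.1, fwdM P.1 P.2.1 P.2.2)

def bwdL (d : ℕ) (C : NM) : NM := fun i j =>
  if i < Nat.count (fun p => p < d ∧ ¬ np d C p) d ∧ j < Nat.count (fun p => p < d ∧ ¬ np d C p) d
  then C (Nat.nth (fun p => p < d ∧ ¬ np d C p) i) (Nat.nth (fun p => p < d ∧ ¬ np d C p) j)
  else 0

def bwdV (d : ℕ) (C : NM) : NM := fun i c =>
  if i < Nat.count (fun p => p < d ∧ ¬ np d C p) d ∧ c < Nat.count (fun p => p < d ∧ ¬ np d C p) d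
      ∧ np d C (Nat.nth (fun p => p < d ∧ ¬ np d C p) c + 1)
  then C (Nat.nth (fun p => p < d ∧ ¬ np d C p) i) (Nat.nth (fun p => p < d ∧ ¬ np d C p) c + 1)
  else 0

def bwd (P : ℕ × NM) : ℕ × NM × NM :=
  (Nat.count (fun p => p < P.1 ∧ ¬ np P.1 P.2 p) P.1, bwdL P.1 P.2, bwdV P.1 P.2)

lemma fpos_le_fpos (V : NM) {i j : ℕ} (h : i ≤ j) : fpos V i ≤ fpos V j := by
  rcases Nat.eq_or_lt_of_le h with h1 | h1
  · subst h1; exact le_refl _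
  · exact le_of_lt (fpos_lt_fpos V h1)

lemma fpos_inj (V : NM) {i j : ℕ} (h : fpos V i = fpos V j) : i = j := by
  by_contra hc
  rcases Nat.lt_or_ge i j with h1 | h1
  · exact absurd (fpos_lt_fpos V h1) (by omega)
  · have h2 : j < i := by omega
    exact absurd (fpos_lt_fpos V h2) (by omega)

lemma new_not_old {m : ℕ} {V : NM} {c : ℕ} (hc : c < m) (ht : Tcol V c) :
    ¬ OldP m V (fpos V c + 1) := by
  rintro ⟨i, hi, he⟩
  have hstep : fpos V (c + 1) = fpos V c + 2 := by
    unfold fpos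
    rw [tb_succ, if_pos ht]
    omega
  rcases Nat.lt_or_ge c i with h1 | h1
  · have := fpos_le_fpos V (show c + 1 ≤ i by omega)
    omega
  · have := fpos_le_fpos V h1
    omega

lemma old_lt_r {m : ℕ} {V : NM} {p : ℕ} (h : OldP m V p) : p < fpos V m := by
  obtain ⟨i, hi, he⟩ := h
  have := fpos_lt_fpos V hi
  omega

lemma new_lt_r {m : ℕ} {V : NM} {q : ℕ} (h : NewP m V q) : q < fpos V m := by
  obtain ⟨c, hc, ht, he⟩ := h
  have hstep : fpos V (c + 1) = fpos V c + 2 := by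
    unfold fpos
    rw [tb_succ, if_pos ht]
    omega
  have := fpos_le_fpos V (show c + 1 ≤ m by omega)
  omega

lemma fwdM_old_old (m : ℕ) (L V : NM) {i j : ℕ} (hi : i < m) (hj : j < m) :
    fwdM m L V (fpos V i) (fpos V j) = L i j := by
  unfold fwdM
  rw [if_pos ⟨i, hi, rfl⟩, if_pos ⟨j, hj, rfl⟩, gpos_fpos, gpos_fpos]

lemma fwdM_old_new (m : ℕ) (L V : NM) {i c : ℕ} (hi : i < m) (hc : c < m) (ht : Tcol V c) :
    fwdM m L V (fpos V i) (fpos V c + 1) = V i c := by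
  unfold fwdM
  rw [if_pos ⟨i, hi, rfl⟩, if_neg (new_not_old hc ht), if_pos ⟨c, hc, ht, rfl⟩]
  have he : fpos V c + 1 - 1 = fpos V c := by omega
  rw [he, gpos_fpos, gpos_fpos]

lemma fwdM_notold (m : ℕ) (L V : NM) {p : ℕ} (h : ¬ OldP m V p) (q : ℕ) :
    fwdM m L V p q = 0 := if_neg h

lemma fwdM_nor (m : ℕ) (L V : NM) {p q : ℕ} (hq1 : ¬ OldP m V q) (hq2 : ¬ NewP m V q) :
    fwdM m L V p q = 0 := by
  unfold fwdM
  by_cases h : OldP m V p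
  · rw [if_pos h, if_neg hq1, if_neg hq2]
  · rw [if_neg h]

lemma fwd_supp (m : ℕ) (L V : NM) (hsL : Supp m L) (hsV : Supp m V) :
    Supp (fpos V m) (fwdM m L V) := by
  intro p q h
  rcases h with h | h | h
  · exact fwdM_notold m L V (fun ho => absurd (old_lt_r ho) (by omega)) q
  · exact fwdM_nor m L V (fun ho => absurd (old_lt_r ho) (by omega))
      (fun hn => absurd (new_lt_r hn) (by omega))
  · by_cases hop : OldP m V p
    · obtain ⟨i, hi, he⟩ := hop
      subst he
      by_cases hoq : OldP m V q
      · obtain ⟨j, hj, he2⟩ := hoq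
        subst he2
        rw [fwdM_old_old m L V hi hj]
        apply hsL
        right; right
        exact (fpos_lt_iff V).mp h
      · by_cases hnq : NewP m V q
        · obtain ⟨cc, hcc, ht, he2⟩ := hnq
          subst he2
          rw [fwdM_old_new m L V hi hcc ht]
          apply hsV
          right; right
          have : fpos V cc < fpos V i := by omega
          exact (fpos_lt_iff V).mp this
        · exact fwdM_nor m L V hoq hnq
    · exact fwdM_notold m L V hop q

lemma new_zr (m : ℕ) (L V : NM) {c : ℕ} (hc : c < m) (ht : Tcol V c) :
    ZR (fwdM m L V) (fpos V c + 1) :=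
  fun q => fwdM_notold m L V (new_not_old hc ht) q

lemma np_fwd (m : ℕ) (L V : NM) (hsL : Supp m L) (hsV : Supp m V)
    (hcnd : ∀ i < m, RowNZ L i ∨ RowNZ V i ∨ ColNZ V i) :
    ∀ p, np (fpos V m) (fwdM m L V) p ↔ NewP m V p := by
  set d := fpos V m with hd
  have key : ∀ t p, d - p ≤ t → (np d (fwdM m L V) p ↔ NewP m V p) := by
    intro t
    induction t with
    | zero =>
      intro p hp
      constructor
      · intro h
        exact absurd (np_lt h) (by omega)
      · intro h
        exact absurd (new_lt_r h) (by omega)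
    | succ t ih =>
      intro p hp
      by_cases hpd : d ≤ p
      · constructor
        · intro h
          exact absurd (np_lt h) (by omega)
        · intro h
          exact absurd (new_lt_r h) (by omega)
      · push_neg at hpd
        have IH1 := ih (p + 1) (by omega)
        rcases fpos_cover V m p hpd with ⟨i, hi, he⟩ | ⟨c, hc, ht, he⟩
        · constructor
          · intro hnp
            exfalso
            have hzr := np_zr hnp
            subst he
            have hL : ¬ RowNZ L i := by
              rintro ⟨j, hj⟩
              have hjm : j < m := by
                by_contra hh
                exact hj (hsL i j (by omega))
              have := hzr (fpos V j)
              rw [fwdM_old_old m L V hi hjm] at this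
              exact hj this
            have hV : ¬ RowNZ V i := by
              rintro ⟨cc, hcc⟩
              have hccm : cc < m := by
                by_contra hh
                exact hcc (hsV i cc (by omega))
              have htc : Tcol V cc := ⟨i, hcc⟩
              have := hzr (fpos V cc + 1)
              rw [fwdM_old_new m L V hi hccm htc] at this
              exact hcc this
            have hT : Tcol V i := by
              rcases hcnd i hi with h | h | h
              · exact absurd h hL
              · exact absurd h hV
              · exact h
            have hnew : NewP m V (fpos V i + 1) := ⟨i, hi, hT, rfl⟩
            exact (np_succ hnp) (IH1.mpr hnew)
          · rintro ⟨c, hc, ht, he2⟩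
            exfalso
            exact new_not_old hc ht ⟨i, hi, by omega⟩
        · have hnew : NewP m V p := ⟨c, hc, ht, he⟩
          constructor
          · intro _
            exact hnew
          · intro _
            rw [np_iff]
            refine ⟨by rw [he]; exact new_zr m L V hc ht, hpd, ?_⟩
            intro hnp1
            obtain ⟨c', hc', ht', he'⟩ := IH1.mp hnp1
            have : fpos V c' = fpos V c + 1 := by omega
            exact new_not_old hc ht ⟨c', hc', this⟩
  intro p
  exact key (d - p) p (le_refl _)

lemma oldb_fwd (m : ℕ) (L V : NM) (hsL : Supp m L) (hsV : Supp m V)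
    (hcnd : ∀ i < m, RowNZ L i ∨ RowNZ V i ∨ ColNZ V i) :
    ∀ p, (p < fpos V m ∧ ¬ np (fpos V m) (fwdM m L V) p) ↔ OldP m V p := by
  intro p
  rw [np_fwd m L V hsL hsV hcnd]
  constructor
  · rintro ⟨h1, h2⟩
    rcases fpos_cover V m p h1 with h | h
    · exact h
    · exact absurd h h2
  · intro h
    refine ⟨old_lt_r h, ?_⟩
    rintro ⟨c, hc, ht, he⟩
    subst he
    exact new_not_old hc ht h

/-! sums over positions -/

lemma sum_positions (V : NM) (m : ℕ) (h : ℕ → ℕ) :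
    ∑ q ∈ Finset.range (fpos V m), h q
      = (∑ j ∈ Finset.range m, h (fpos V j))
        + ∑ c ∈ Finset.range m, (if Tcol V c then h (fpos V c + 1) else 0) := by
  induction m with
  | zero => rw [fpos_zero]; simp
  | succ m ih =>
    have hstep : fpos V (m + 1) = fpos V m + 1 + (if Tcol V m then 1 else 0) := by
      unfold fpos
      rw [tb_succ]
      omega
    rw [Finset.sum_range_succ (fun j => h (fpos V j)),
      Finset.sum_range_succ (fun c => if Tcol V c then h (fpos V c + 1) else 0)]
    by_cases ht : Tcol V m
    · rw [if_pos ht] at hstep ⊢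
      rw [hstep, Finset.sum_range_succ, Finset.sum_range_succ]
      omega
    · rw [if_neg ht] at hstep ⊢
      rw [hstep, Finset.sum_range_succ]
      omega

lemma fwd_rsum (m : ℕ) (L V : NM) (hsL : Supp m L) (hsV : Supp m V) {i : ℕ} (hi : i < m) :
    rsum (fpos V m) (fwdM m L V) (fpos V i) = rsum m L i + rsum m V i := by
  unfold rsum
  rw [sum_positions V m (fun q => fwdM m L V (fpos V i) q)]
  congr 1
  · apply Finset.sum_congr rfl
    intro j hj
    simp only [Finset.mem_range] at hj
    exact fwdM_old_old m L V hi hj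
  · apply Finset.sum_congr rfl
    intro c hc
    simp only [Finset.mem_range] at hc
    by_cases ht : Tcol V c
    · rw [if_pos ht]
      exact fwdM_old_new m L V hi hc ht
    · rw [if_neg ht]
      symm
      by_contra hne
      exact ht ⟨i, hne⟩

lemma fwd_tsize (m : ℕ) (L V : NM) (hsL : Supp m L) (hsV : Supp m V) :
    tsize (fpos V m) (fwdM m L V) = tsize m L + tsize m V := by
  unfold tsize
  rw [sum_positions V m (fun p => rsum (fpos V m) (fwdM m L V) p)]
  have h2 : ∀ c ∈ Finset.range m,
      (if Tcol V c then rsum (fpos V m) (fwdM m L V) (fpos V c + 1) else 0) = 0 := by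
    intro c hc
    simp only [Finset.mem_range] at hc
    by_cases ht : Tcol V c
    · rw [if_pos ht]
      unfold rsum
      exact Finset.sum_eq_zero (fun q _ => new_zr m L V hc ht q)
    · exact if_neg ht
  have h1 : ∀ j ∈ Finset.range m,
      rsum (fpos V m) (fwdM m L V) (fpos V j) = rsum m L j + rsum m V j := by
    intro j hj
    simp only [Finset.mem_range] at hj
    exact fwd_rsum m L V hsL hsV hj
  rw [Finset.sum_congr rfl h2, Finset.sum_congr rfl h1, Finset.sum_const_zero,
    Finset.sum_add_distrib, add_zero]

lemma card_old_below (m : ℕ) (V : NM) {i : ℕ} (hi : i ≤ m) :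
    (Finset.filter (OldP m V) (Finset.range (fpos V i))).card = i := by
  have hb : (Finset.filter (OldP m V) (Finset.range (fpos V i))).card
      = (Finset.range i).card := by
    apply Finset.card_bij' (fun p _ => gpos V p) (fun j _ => fpos V j)
    · intro p hp
      simp only [Finset.mem_filter, Finset.mem_range] at hp
      obtain ⟨hp1, j, hj, he⟩ := hp
      subst he
      rw [gpos_fpos]
      simp only [Finset.mem_range]
      exact (fpos_lt_iff V).mp hp1
    · intro j hj
      simp only [Finset.mem_range] at hj
      simp only [Finset.mem_filter, Finset.mem_range]
      exact ⟨fpos_lt_fpos V hj, j, by omega, rfl⟩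
    · intro p hp
      simp only [Finset.mem_filter, Finset.mem_range] at hp
      obtain ⟨hp1, j, hj, he⟩ := hp
      subst he
      rw [gpos_fpos]
    · intro j hj
      rw [gpos_fpos]
  rw [hb, Finset.card_range]

lemma count_oldb_fwd (m : ℕ) (L V : NM) (hsL : Supp m L) (hsV : Supp m V)
    (hcnd : ∀ i < m, RowNZ L i ∨ RowNZ V i ∨ ColNZ V i) {i : ℕ} (hi : i ≤ m) :
    Nat.count (fun p => p < fpos V m ∧ ¬ np (fpos V m) (fwdM m L V) p) (fpos V i) = i := by
  rw [Nat.count_eq_card_filter_range]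
  have hf : Finset.filter (fun p => p < fpos V m ∧ ¬ np (fpos V m) (fwdM m L V) p)
      (Finset.range (fpos V i)) = Finset.filter (OldP m V) (Finset.range (fpos V i)) := by
    apply Finset.ext
    intro x
    simp only [Finset.mem_filter, Finset.mem_range]
    constructor
    · rintro ⟨h1, h2⟩
      exact ⟨h1, (oldb_fwd m L V hsL hsV hcnd x).mp h2⟩
    · rintro ⟨h1, h2⟩
      exact ⟨h1, (oldb_fwd m L V hsL hsV hcnd x).mpr h2⟩
  rw [hf, card_old_below m V hi]

lemma pos_fwd (m : ℕ) (L V : NM) (hsL : Supp m L) (hsV : Supp m V)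
    (hcnd : ∀ i < m, RowNZ L i ∨ RowNZ V i ∨ ColNZ V i) {i : ℕ} (hi : i < m) :
    Nat.nth (fun p => p < fpos V m ∧ ¬ np (fpos V m) (fwdM m L V) p) i = fpos V i := by
  have hOB : (fun p => p < fpos V m ∧ ¬ np (fpos V m) (fwdM m L V) p) (fpos V i) :=
    (oldb_fwd m L V hsL hsV hcnd (fpos V i)).mpr ⟨i, hi, rfl⟩
  have h2 := Nat.nth_count (p := fun p => p < fpos V m ∧ ¬ np (fpos V m) (fwdM m L V) p) hOB
  rwa [count_oldb_fwd m L V hsL hsV hcnd (le_of_lt hi)] at h2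

lemma bwd_fwd (m : ℕ) (L V : NM) (hsL : Supp m L) (hsV : Supp m V)
    (hcL : ∀ j < m, ColNZ L j)
    (hcnd : ∀ i < m, RowNZ L i ∨ RowNZ V i ∨ ColNZ V i) :
    bwd (fwd (m, L, V)) = (m, L, V) := by
  have hcnt : Nat.count (fun p => p < fpos V m ∧ ¬ np (fpos V m) (fwdM m L V) p)
      (fpos V m) = m := count_oldb_fwd m L V hsL hsV hcnd (le_refl m)
  refine Prod.ext ?_ (Prod.ext ?_ ?_)
  · exact hcnt
  · show bwdL (fpos V m) (fwdM m L V) = L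
    funext i j
    unfold bwdL
    rw [hcnt]
    by_cases h : i < m ∧ j < m
    · rw [if_pos h, pos_fwd m L V hsL hsV hcnd h.1, pos_fwd m L V hsL hsV hcnd h.2]
      exact fwdM_old_old m L V h.1 h.2
    · rw [if_neg h]
      exact (hsL i j (by omega)).symm
  · show bwdV (fpos V m) (fwdM m L V) = V
    funext i cc
    unfold bwdV
    rw [hcnt]
    by_cases hg : i < m ∧ cc < m
    · rw [pos_fwd m L V hsL hsV hcnd hg.2]
      by_cases ht : Tcol V cc
      · have hnpc : np (fpos V m) (fwdM m L V) (fpos V cc + 1) := by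
          rw [np_fwd m L V hsL hsV hcnd]
          exact ⟨cc, hg.2, ht, rfl⟩
        rw [if_pos ⟨hg.1, hg.2, hnpc⟩, pos_fwd m L V hsL hsV hcnd hg.1]
        exact fwdM_old_new m L V hg.1 hg.2 ht
      · rw [if_neg ?_]
        · symm
          by_contra hne
          exact ht ⟨i, hne⟩
        · rintro ⟨_, _, hnp⟩
          rw [np_fwd m L V hsL hsV hcnd] at hnp
          obtain ⟨c', hc', ht', he'⟩ := hnp
          have : c' = cc := fpos_inj V (by omega)
          subst this
          exact ht ht'
    · rw [if_neg (fun hh => hg ⟨hh.1, hh.2.1⟩)]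
      exact (hsV i cc (by omega)).symm

lemma fwd_mem {n k : ℕ} (hn : 1 ≤ n) (P : ℕ × NM × NM) (hP : P ∈ PairSet n k) :
    fwd P ∈ CSet n k := by
  obtain ⟨m, L, V⟩ := P
  obtain ⟨hsL, hsV, hcL, hcnd, hsize, hfst⟩ := hP
  dsimp only at hsL hsV hcL hcnd hsize hfst
  have hm1 : 0 < m := by
    by_contra h
    have h0 : m = 0 := by omega
    subst h0
    unfold tsize at hsize
    simp at hsize
    omega
  show (fpos V m, fwdM m L V) ∈ CSet n k
  unfold CSet
  simp only [Set.mem_setOf_eq]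
  refine ⟨?_, ?_, ?_, ?_⟩
  · exact fwd_supp m L V hsL hsV
  · intro q hq
    rcases fpos_cover V m q hq with ⟨j, hj, he⟩ | ⟨cc, hcc, ht, he⟩
    · obtain ⟨i, hi⟩ := hcL j hj
      have him : i < m := by
        by_contra hh
        exact hi (hsL i j (by omega))
      refine ⟨fpos V i, ?_⟩
      subst he
      rw [fwdM_old_old m L V him hj]
      exact hi
    · obtain ⟨r, hr⟩ := ht
      have hrm : r < m := by
        by_contra hh
        exact hr (hsV r cc (by omega))
      refine ⟨fpos V r, ?_⟩
      subst he
      rw [fwdM_old_new m L V hrm hcc ⟨r, hr⟩]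
      exact hr
  · show tsize (fpos V m) (fwdM m L V) = n
    rw [fwd_tsize m L V hsL hsV]
    exact hsize
  · show rsum (fpos V m) (fwdM m L V) 0 = k
    have h0 : (0 : ℕ) = fpos V 0 := (fpos_zero V).symm
    rw [h0, fwd_rsum m L V hsL hsV hm1]
    exact hfst

/-! backward direction -/

section Backward

variable (d : ℕ) (C : NM)

lemma bOB_fin : {p | p < d ∧ ¬ np d C p}.Finite :=
  Set.Finite.subset (Set.finite_Iio d) (fun _ hx => hx.1)

lemma bOB_card : (bOB_fin d C).toFinset.card
    = Nat.count (fun p => p < d ∧ ¬ np d C p) d := by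
  rw [Nat.count_eq_card_filter_range]
  congr 1
  apply Finset.ext
  intro x
  simp only [Set.Finite.mem_toFinset, Set.mem_setOf_eq, Finset.mem_filter, Finset.mem_range]
  constructor
  · intro h
    exact ⟨h.1, h⟩
  · intro h
    exact h.2

lemma bpos_mem {i : ℕ} (hi : i < Nat.count (fun p => p < d ∧ ¬ np d C p) d) :
    Nat.nth (fun p => p < d ∧ ¬ np d C p) i < d
      ∧ ¬ np d C (Nat.nth (fun p => p < d ∧ ¬ np d C p) i) :=
  Nat.nth_mem_of_lt_card (bOB_fin d C) (by rw [bOB_card]; exact hi)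

lemma bcount_pos {i : ℕ} (hi : i < Nat.count (fun p => p < d ∧ ¬ np d C p) d) :
    Nat.count (fun p => p < d ∧ ¬ np d C p) (Nat.nth (fun p => p < d ∧ ¬ np d C p) i) = i :=
  Nat.count_nth_of_lt_card_finite (bOB_fin d C) (by rw [bOB_card]; exact hi)

lemma bpos_mono {i j : ℕ} (hij : i < j) (hj : j < Nat.count (fun p => p < d ∧ ¬ np d C p) d) :
    Nat.nth (fun p => p < d ∧ ¬ np d C p) i < Nat.nth (fun p => p < d ∧ ¬ np d C p) j :=
  Nat.nth_lt_nth_of_lt_card (bOB_fin d C) hij (by rw [bOB_card]; exact hj)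

lemma bcount_lt {p : ℕ} (hp : p < d ∧ ¬ np d C p) :
    Nat.count (fun p => p < d ∧ ¬ np d C p) p
      < Nat.count (fun p => p < d ∧ ¬ np d C p) d := by
  have h1 : Nat.count (fun p => p < d ∧ ¬ np d C p) (p + 1)
      = Nat.count (fun p => p < d ∧ ¬ np d C p) p + 1 := by
    rw [Nat.count_succ, if_pos hp]
  have h2 : Nat.count (fun p => p < d ∧ ¬ np d C p) (p + 1)
      ≤ Nat.count (fun p => p < d ∧ ¬ np d C p) d :=
    Nat.count_monotone _ (by omega)
  omega

variable {d C}

lemma bnp0 (hs : Supp d C) (hc : ∀ q < d, ColNZ C q) (hd0 : 0 < d) : ¬ np d C 0 := by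
  obtain ⟨p, hp⟩ := hc 0 hd0
  have hp0 : p = 0 := by
    by_contra h
    exact hp (hs p 0 (by omega))
  subst hp0
  intro h
  exact hp (np_zr h 0)

lemma bpartition {b : ℕ} (hb : b ≤ d) :
    Nat.count (fun p => p < d ∧ ¬ np d C p) b
      + (Finset.filter (np d C) (Finset.range b)).card = b := by
  rw [Nat.count_eq_card_filter_range]
  have h2 : Finset.filter (np d C) (Finset.range b)
      = Finset.filter (fun x => ¬ (x < d ∧ ¬ np d C x)) (Finset.range b) := by
    apply Finset.ext
    intro x
    simp only [Finset.mem_filter, Finset.mem_range]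
    constructor
    · rintro ⟨h1, h3⟩
      exact ⟨h1, fun hh => hh.2 h3⟩
    · rintro ⟨h1, h3⟩
      refine ⟨h1, ?_⟩
      by_contra hnp
      exact h3 ⟨by omega, hnp⟩
  rw [h2, Finset.card_filter_add_card_filter_not, Finset.card_range]

lemma bcount_news (hs : Supp d C) (hc : ∀ q < d, ColNZ C q) {b : ℕ} (hb : b ≤ d)
    (hnb : ¬ np d C b ∨ b = d) :
    (Finset.filter (np d C) (Finset.range b)).card
      = (Finset.filter (fun c => np d C (Nat.nth (fun p => p < d ∧ ¬ np d C p) c + 1))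
          (Finset.range (Nat.count (fun p => p < d ∧ ¬ np d C p) b))).card := by
  rcases Nat.eq_zero_or_pos d with hd0 | hd0
  · subst hd0
    have hb0 : b = 0 := by omega
    subst hb0
    simp
  apply Finset.card_bij' (fun q _ => Nat.count (fun p => p < d ∧ ¬ np d C p) (q - 1))
    (fun c _ => Nat.nth (fun p => p < d ∧ ¬ np d C p) c + 1)
  · intro q hq
    simp only [Finset.mem_filter, Finset.mem_range] at hq ⊢
    obtain ⟨hq1, hq2⟩ := hq
    have hq0 : 1 ≤ q := by
      rcases Nat.eq_zero_or_pos q with h | h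
      · subst h
        exact absurd hq2 (bnp0 hs hc hd0)
      · exact h
    have hOB : q - 1 < d ∧ ¬ np d C (q - 1) := ⟨by have := np_lt hq2; omega, np_pred hq2 hq0⟩
    have hlt : Nat.count (fun p => p < d ∧ ¬ np d C p) (q - 1)
        < Nat.count (fun p => p < d ∧ ¬ np d C p) b := by
      have h1 : Nat.count (fun p => p < d ∧ ¬ np d C p) (q - 1 + 1)
          = Nat.count (fun p => p < d ∧ ¬ np d C p) (q - 1) + 1 := by
        rw [Nat.count_succ, if_pos hOB]
      have h2 : Nat.count (fun p => p < d ∧ ¬ np d C p) (q - 1 + 1)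
          ≤ Nat.count (fun p => p < d ∧ ¬ np d C p) b :=
        Nat.count_monotone _ (by omega)
      omega
    refine ⟨hlt, ?_⟩
    have he : Nat.nth (fun p => p < d ∧ ¬ np d C p)
        (Nat.count (fun p => p < d ∧ ¬ np d C p) (q - 1)) = q - 1 :=
      Nat.nth_count (p := fun p => p < d ∧ ¬ np d C p) hOB
    rw [he]
    have he2 : q - 1 + 1 = q := by omega
    rw [he2]
    exact hq2
  · intro cc hcc
    simp only [Finset.mem_filter, Finset.mem_range] at hcc ⊢
    obtain ⟨hcc1, hcc2⟩ := hcc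
    have hposlt : Nat.nth (fun p => p < d ∧ ¬ np d C p) cc < b :=
      Nat.nth_lt_of_lt_count hcc1
    refine ⟨?_, hcc2⟩
    have hne : Nat.nth (fun p => p < d ∧ ¬ np d C p) cc + 1 ≠ b := by
      rcases hnb with h | h
      · intro he
        rw [he] at hcc2
        exact h hcc2
      · intro he
        rw [he, h] at hcc2
        exact absurd (np_lt hcc2) (by omega)
    omega
  · intro q hq
    simp only [Finset.mem_filter, Finset.mem_range] at hq
    obtain ⟨hq1, hq2⟩ := hq
    have hq0 : 1 ≤ q := by
      rcases Nat.eq_zero_or_pos q with h | h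
      · subst h
        exact absurd hq2 (bnp0 hs hc hd0)
      · exact h
    have hOB : q - 1 < d ∧ ¬ np d C (q - 1) := ⟨by have := np_lt hq2; omega, np_pred hq2 hq0⟩
    have he : Nat.nth (fun p => p < d ∧ ¬ np d C p)
        (Nat.count (fun p => p < d ∧ ¬ np d C p) (q - 1)) = q - 1 :=
      Nat.nth_count (p := fun p => p < d ∧ ¬ np d C p) hOB
    rw [he]
    omega
  · intro cc hcc
    simp only [Finset.mem_filter, Finset.mem_range] at hcc
    have he : Nat.nth (fun p => p < d ∧ ¬ np d C p) cc + 1 - 1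
        = Nat.nth (fun p => p < d ∧ ¬ np d C p) cc := by omega
    rw [he]
    exact bcount_pos d C (by
      calc cc < Nat.count (fun p => p < d ∧ ¬ np d C p) b := hcc.1
      _ ≤ Nat.count (fun p => p < d ∧ ¬ np d C p) d := Nat.count_monotone _ hb)

lemma bTcol (hs : Supp d C) (hc : ∀ q < d, ColNZ C q) {cc : ℕ}
    (hcc : cc < Nat.count (fun p => p < d ∧ ¬ np d C p) d) :
    Tcol (bwdV d C) cc ↔ np d C (Nat.nth (fun p => p < d ∧ ¬ np d C p) cc + 1) := by
  constructor
  · rintro ⟨r, hr⟩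
    by_contra h
    exact hr (if_neg (fun hg => h hg.2.2))
  · intro hnp
    obtain ⟨p, hp⟩ := hc _ (np_lt hnp)
    have hpd : p < d ∧ p ≤ Nat.nth (fun p => p < d ∧ ¬ np d C p) cc + 1 := by
      constructor
      · by_contra h
        exact hp (hs _ _ (by omega))
      · by_contra h
        exact hp (hs _ _ (by omega))
    have hpnotnp : ¬ np d C p := by
      intro h
      exact hp (np_zr h _)
    have hOBp : p < d ∧ ¬ np d C p := ⟨hpd.1, hpnotnp⟩
    have hpne : p ≠ Nat.nth (fun p => p < d ∧ ¬ np d C p) cc + 1 := by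
      intro he
      rw [← he] at hnp
      exact hpnotnp hnp
    have hple : p ≤ Nat.nth (fun p => p < d ∧ ¬ np d C p) cc := by omega
    set i := Nat.count (fun p => p < d ∧ ¬ np d C p) p with hi
    have hile : i ≤ cc := by
      have h1 : Nat.count (fun p => p < d ∧ ¬ np d C p) p
          ≤ Nat.count (fun p => p < d ∧ ¬ np d C p)
            (Nat.nth (fun p => p < d ∧ ¬ np d C p) cc) := Nat.count_monotone _ hple
      rw [bcount_pos d C hcc] at h1
      exact h1
    have hilt : i < Nat.count (fun p => p < d ∧ ¬ np d C p) d := bcount_lt d C hOBp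
    have hpos : Nat.nth (fun p => p < d ∧ ¬ np d C p) i = p :=
      Nat.nth_count (p := fun p => p < d ∧ ¬ np d C p) hOBp
    refine ⟨i, ?_⟩
    show bwdV d C i cc ≠ 0
    unfold bwdV
    rw [if_pos ⟨hilt, hcc, hnp⟩, hpos]
    exact hp

lemma bfpos (hs : Supp d C) (hc : ∀ q < d, ColNZ C q) {i : ℕ}
    (hi : i ≤ Nat.count (fun p => p < d ∧ ¬ np d C p) d) {b : ℕ} (hb : b ≤ d)
    (hcb : Nat.count (fun p => p < d ∧ ¬ np d C p) b = i) (hnb : ¬ np d C b ∨ b = d) :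
    fpos (bwdV d C) i = b := by
  have htb : tb (bwdV d C) i = (Finset.filter (np d C) (Finset.range b)).card := by
    unfold tb
    rw [bcount_news hs hc hb hnb, hcb]
    congr 1
    apply Finset.ext
    intro x
    simp only [Finset.mem_filter, Finset.mem_range]
    constructor
    · rintro ⟨h1, h2⟩
      exact ⟨h1, (bTcol hs hc (by omega)).mp h2⟩
    · rintro ⟨h1, h2⟩
      exact ⟨h1, (bTcol hs hc (by omega)).mpr h2⟩
  have hpart := bpartition (C := C) hb
  unfold fpos
  omega

lemma bfpos_nth (hs : Supp d C) (hc : ∀ q < d, ColNZ C q) {i : ℕ}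
    (hi : i < Nat.count (fun p => p < d ∧ ¬ np d C p) d) :
    fpos (bwdV d C) i = Nat.nth (fun p => p < d ∧ ¬ np d C p) i :=
  bfpos hs hc (by omega) (le_of_lt (bpos_mem d C hi).1) (bcount_pos d C hi)
    (Or.inl (bpos_mem d C hi).2)

lemma fwd_bwd (hs : Supp d C) (hc : ∀ q < d, ColNZ C q) :
    fwd (bwd (d, C)) = (d, C) := by
  set m' := Nat.count (fun p => p < d ∧ ¬ np d C p) d with hm'
  have hOld : ∀ p, OldP m' (bwdV d C) p ↔ (p < d ∧ ¬ np d C p) := by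
    intro p
    constructor
    · rintro ⟨i, hi, he⟩
      have hfp : fpos (bwdV d C) i = Nat.nth (fun p => p < d ∧ ¬ np d C p) i := by
        apply bfpos hs hc (by omega) (le_of_lt (bpos_mem d C hi).1)
          (bcount_pos d C hi)
        exact Or.inl (bpos_mem d C hi).2
      rw [hfp] at he
      rw [← he]
      exact bpos_mem d C hi
    · intro hOB
      have hilt := bcount_lt d C hOB
      refine ⟨Nat.count (fun p => p < d ∧ ¬ np d C p) p, hilt, ?_⟩
      have hpos : Nat.nth (fun p => p < d ∧ ¬ np d C p)
          (Nat.count (fun p => p < d ∧ ¬ np d C p) p) = p :=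
        Nat.nth_count (p := fun p => p < d ∧ ¬ np d C p) hOB
      rw [bfpos hs hc (le_of_lt hilt) (le_of_lt hOB.1) rfl (Or.inl hOB.2)]
  have hNew : ∀ q, NewP m' (bwdV d C) q ↔ np d C q := by
    intro q
    constructor
    · rintro ⟨cc, hcc, ht, he⟩
      rw [bTcol hs hc hcc] at ht
      have hfp : fpos (bwdV d C) cc = Nat.nth (fun p => p < d ∧ ¬ np d C p) cc :=
        bfpos hs hc (by omega) (le_of_lt (bpos_mem d C hcc).1) (bcount_pos d C hcc)
          (Or.inl (bpos_mem d C hcc).2)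
      rw [he, hfp]
      exact ht
    · intro hnp
      have hd0 : 0 < d := by
        have := np_lt hnp
        omega
      have hq0 : 1 ≤ q := by
        rcases Nat.eq_zero_or_pos q with h | h
        · subst h
          exact absurd hnp (bnp0 hs hc hd0)
        · exact h
      have hOB : q - 1 < d ∧ ¬ np d C (q - 1) := ⟨by have := np_lt hnp; omega, np_pred hnp hq0⟩
      have hilt := bcount_lt d C hOB
      have hpos : Nat.nth (fun p => p < d ∧ ¬ np d C p)
          (Nat.count (fun p => p < d ∧ ¬ np d C p) (q - 1)) = q - 1 :=
        Nat.nth_count (p := fun p => p < d ∧ ¬ np d C p) hOB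
      refine ⟨Nat.count (fun p => p < d ∧ ¬ np d C p) (q - 1), hilt, ?_, ?_⟩
      · rw [bTcol hs hc hilt, hpos]
        have he : q - 1 + 1 = q := by omega
        rw [he]
        exact hnp
      · rw [bfpos hs hc (le_of_lt hilt) (le_of_lt hOB.1) rfl (Or.inl hOB.2)]
        omega
  refine Prod.ext ?_ ?_
  · show fpos (bwdV d C) m' = d
    exact bfpos hs hc (le_refl _) (le_refl _) rfl (Or.inr rfl)
  · show fwdM m' (bwdL d C) (bwdV d C) = C
    funext p q
    by_cases hop : p < d ∧ ¬ np d C p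
    · obtain ⟨i, hi, hei⟩ := (hOld p).mpr hop
      have hnthi : Nat.nth (fun p => p < d ∧ ¬ np d C p) i = p := by
        rw [← bfpos_nth hs hc hi]
        exact hei
      by_cases hoq : q < d ∧ ¬ np d C q
      · obtain ⟨j, hj, hej⟩ := (hOld q).mpr hoq
        have hnthj : Nat.nth (fun p => p < d ∧ ¬ np d C p) j = q := by
          rw [← bfpos_nth hs hc hj]
          exact hej
        rw [← hei, ← hej, fwdM_old_old m' (bwdL d C) (bwdV d C) hi hj]
        show bwdL d C i j = C (fpos (bwdV d C) i) (fpos (bwdV d C) j)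
        unfold bwdL
        rw [if_pos ⟨hi, hj⟩, bfpos_nth hs hc hi, bfpos_nth hs hc hj]
      · by_cases hnq : np d C q
        · obtain ⟨cc, hcc, ht, he⟩ := (hNew q).mpr hnq
          rw [← hei, he, fwdM_old_new m' (bwdL d C) (bwdV d C) hi hcc ht]
          have hnpcc : np d C (Nat.nth (fun p => p < d ∧ ¬ np d C p) cc + 1) := by
            rw [← bTcol hs hc hcc]
            exact ht
          show bwdV d C i cc = C (fpos (bwdV d C) i) (fpos (bwdV d C) cc + 1)
          rw [bfpos_nth hs hc hi, bfpos_nth hs hc hcc]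
          exact if_pos ⟨hi, hcc, hnpcc⟩
        · have hqd : d ≤ q := by
            by_contra h
            exact hoq ⟨by omega, hnq⟩
          rw [fwdM_nor m' (bwdL d C) (bwdV d C)
            (fun ho => by have := ((hOld q).mp ho).1; omega)
            (fun hnw => hnq ((hNew q).mp hnw))]
          exact (hs p q (by omega)).symm
    · rw [fwdM_notold m' (bwdL d C) (bwdV d C) (fun ho => hop ((hOld p).mp ho)) q]
      by_cases hpd : p < d
      · have hnp : np d C p := by
          by_contra h
          exact hop ⟨hpd, h⟩
        exact (np_zr hnp q).symm
      · exact (hs p q (by omega)).symm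

lemma bwdL_supp (hs : Supp d C) :
    Supp (Nat.count (fun p => p < d ∧ ¬ np d C p) d) (bwdL d C) := by
  intro p q h
  set m' := Nat.count (fun p => p < d ∧ ¬ np d C p) d with hm'
  by_cases hg : p < m' ∧ q < m'
  · have hqp : q < p := by rcases h with h | h | h <;> omega
    show bwdL d C p q = 0
    unfold bwdL
    rw [if_pos hg]
    apply hs
    right; right
    exact bpos_mono d C hqp hg.1
  · exact if_neg hg

lemma bwdV_supp (hs : Supp d C) :
    Supp (Nat.count (fun p => p < d ∧ ¬ np d C p) d) (bwdV d C) := by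
  intro p cc h
  set m' := Nat.count (fun p => p < d ∧ ¬ np d C p) d with hm'
  show bwdV d C p cc = 0
  unfold bwdV
  by_cases hg : p < m' ∧ cc < m' ∧ np d C (Nat.nth (fun p => p < d ∧ ¬ np d C p) cc + 1)
  · rw [if_pos hg]
    have hccp : cc < p := by rcases h with h | h | h <;> omega
    have h1 : Nat.nth (fun p => p < d ∧ ¬ np d C p) cc
        < Nat.nth (fun p => p < d ∧ ¬ np d C p) p := bpos_mono d C hccp hg.1
    have h2 : Nat.nth (fun p => p < d ∧ ¬ np d C p) cc + 1
        ≠ Nat.nth (fun p => p < d ∧ ¬ np d C p) p := by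
      intro he
      have := (bpos_mem d C hg.1).2
      rw [← he] at this
      exact this hg.2.2
    have h3 : cc + 1 ≤ p := by omega
    have h4 : Nat.nth (fun p => p < d ∧ ¬ np d C p) cc + 1
        < Nat.nth (fun p => p < d ∧ ¬ np d C p) p := by omega
    apply hs
    right; right
    exact h4
  · exact if_neg hg

lemma bwd_mem {n k : ℕ} (hn : 1 ≤ n) (Q : ℕ × NM) (hQ : Q ∈ CSet n k) :
    bwd Q ∈ PairSet n k := by
  obtain ⟨d, C⟩ := Q
  obtain ⟨hs, hc, hts, hr0⟩ := hQ
  dsimp only at hs hc hts hr0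
  set m' := Nat.count (fun p => p < d ∧ ¬ np d C p) d with hm'
  have hd0 : 0 < d := by
    by_contra h
    have hz : tsize d C = 0 := by
      unfold tsize
      have hϵ : d = 0 := by omega
      subst hϵ
      simp
    omega
  have hOB0 : 0 < d ∧ ¬ np d C 0 := ⟨hd0, bnp0 hs hc hd0⟩
  have hm0 : 0 < m' := by
    have h1 := bcount_lt d C hOB0
    have h2 : Nat.count (fun p => p < d ∧ ¬ np d C p) 0 = 0 := rfl
    omega
  have hsL' := bwdL_supp (C := C) hs
  have hsV' := bwdV_supp (C := C) hs
  have hfb := fwd_bwd hs hc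
  have hfb1 : fpos (bwdV d C) m' = d := congrArg Prod.fst hfb
  have hfb2 : fwdM m' (bwdL d C) (bwdV d C) = C := congrArg Prod.snd hfb
  show (m', bwdL d C, bwdV d C) ∈ PairSet n k
  unfold PairSet
  simp only [Set.mem_setOf_eq]
  refine ⟨hsL', hsV', ?_, ?_, ?_, ?_⟩
  · intro j hj
    obtain ⟨p, hp⟩ := hc (Nat.nth (fun p => p < d ∧ ¬ np d C p) j) (bpos_mem d C hj).1
    have hpd : p < d ∧ p ≤ Nat.nth (fun p => p < d ∧ ¬ np d C p) j := by
      constructor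
      · by_contra h
        exact hp (hs _ _ (by omega))
      · by_contra h
        exact hp (hs _ _ (by omega))
    have hOBp : p < d ∧ ¬ np d C p := by
      refine ⟨hpd.1, ?_⟩
      intro h
      exact hp (np_zr h _)
    have hilt := bcount_lt d C hOBp
    have hpos : Nat.nth (fun p => p < d ∧ ¬ np d C p)
        (Nat.count (fun p => p < d ∧ ¬ np d C p) p) = p :=
      Nat.nth_count (p := fun p => p < d ∧ ¬ np d C p) hOBp
    have hile : Nat.count (fun p => p < d ∧ ¬ np d C p) p ≤ j := by
      have h1 : Nat.count (fun p => p < d ∧ ¬ np d C p) p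
          ≤ Nat.count (fun p => p < d ∧ ¬ np d C p)
            (Nat.nth (fun p => p < d ∧ ¬ np d C p) j) := Nat.count_monotone _ hpd.2
      rw [bcount_pos d C hj] at h1
      exact h1
    refine ⟨Nat.count (fun p => p < d ∧ ¬ np d C p) p, ?_⟩
    show bwdL d C _ j ≠ 0
    unfold bwdL
    rw [if_pos ⟨hilt, hj⟩, hpos]
    exact hp
  · intro i hi
    by_cases hL : RowNZ (bwdL d C) i
    · exact Or.inl hL
    by_cases hV : RowNZ (bwdV d C) i
    · exact Or.inr (Or.inl hV)
    right; right
    have hzr : ZR C (Nat.nth (fun p => p < d ∧ ¬ np d C p) i) := by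
      intro q
      by_contra hne
      have hqd : q < d := by
        by_contra h
        exact hne (hs _ _ (by omega))
      by_cases hq : q < d ∧ ¬ np d C q
      · apply hL
        refine ⟨Nat.count (fun p => p < d ∧ ¬ np d C p) q, ?_⟩
        have hjlt := bcount_lt d C hq
        have hpos : Nat.nth (fun p => p < d ∧ ¬ np d C p)
            (Nat.count (fun p => p < d ∧ ¬ np d C p) q) = q :=
          Nat.nth_count (p := fun p => p < d ∧ ¬ np d C p) hq
        show bwdL d C i _ ≠ 0
        unfold bwdL
        rw [if_pos ⟨hi, hjlt⟩, hpos]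
        exact hne
      · have hnpq : np d C q := by
          by_contra h
          exact hq ⟨hqd, h⟩
        have hq0 : 1 ≤ q := by
          rcases Nat.eq_zero_or_pos q with h | h
          · subst h
            exact absurd hnpq (bnp0 hs hc hd0)
          · exact h
        have hOBq : q - 1 < d ∧ ¬ np d C (q - 1) := ⟨by omega, np_pred hnpq hq0⟩
        have hclt := bcount_lt d C hOBq
        have hposq : Nat.nth (fun p => p < d ∧ ¬ np d C p)
            (Nat.count (fun p => p < d ∧ ¬ np d C p) (q - 1)) = q - 1 :=
          Nat.nth_count (p := fun p => p < d ∧ ¬ np d C p) hOBq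
        apply hV
        refine ⟨Nat.count (fun p => p < d ∧ ¬ np d C p) (q - 1), ?_⟩
        have hnpq' : np d C (Nat.nth (fun p => p < d ∧ ¬ np d C p)
            (Nat.count (fun p => p < d ∧ ¬ np d C p) (q - 1)) + 1) := by
          rw [hposq]
          have he : q - 1 + 1 = q := by omega
          rw [he]
          exact hnpq
        show bwdV d C i _ ≠ 0
        unfold bwdV
        rw [if_pos ⟨hi, hclt, hnpq'⟩, hposq]
        have he : q - 1 + 1 = q := by omega
        rw [he]
        exact hne
    have hnpi1 : np d C (Nat.nth (fun p => p < d ∧ ¬ np d C p) i + 1) := by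
      have hOBi := bpos_mem d C hi
      by_contra h
      apply hOBi.2
      rw [np_iff]
      exact ⟨hzr, hOBi.1, by
        intro hh
        exact h hh⟩
    rw [← bTcol hs hc hi] at hnpi1
    exact hnpi1
  · have h := fwd_tsize m' (bwdL d C) (bwdV d C) hsL' hsV'
    rw [hfb1, hfb2] at h
    omega
  · have h := fwd_rsum m' (bwdL d C) (bwdV d C) hsL' hsV' hm0
    rw [hfb2, fpos_zero] at h
    rw [hfb1] at h
    omega

def e2 (n k : ℕ) (hn : 1 ≤ n) : ↥(PairSet n k) ≃ ↥(CSet n k) where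
  toFun := fun ⟨P, hP⟩ => ⟨fwd P, fwd_mem hn P hP⟩
  invFun := fun ⟨Q, hQ⟩ => ⟨bwd Q, bwd_mem hn Q hQ⟩
  left_inv := by
    rintro ⟨⟨m, L, V⟩, hP⟩
    apply Subtype.ext
    obtain ⟨hsL, hsV, hcL, hcnd, _, _⟩ := hP
    exact bwd_fwd m L V hsL hsV hcL hcnd
  right_inv := by
    rintro ⟨⟨d, C⟩, hQ⟩
    apply Subtype.ext
    obtain ⟨hs, hc, _, _⟩ := hQ
    exact fwd_bwd hs hc

end Backward

end SD12
end

/-- `|EM(n,k)| = |RM(n,k)|` for all `n ≥ 1`, `k ≥ 0`. -/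
theorem stmt12 (n k : ℕ) (hn : 1 ≤ n) :
    (EMset n k).ncard = (RMset₂ n k).ncard := by
  have e := ((SD12.e1 n k hn).trans (SD12.e2 n k hn)).trans (SD12.e3 n k hn)
  rw [← Nat.card_coe_set_eq, ← Nat.card_coe_set_eq]
  exact Nat.card_congr e
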